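/- arXiv:2201.11042 — 4 statements merged into one kernel-verified Lean document; each statement's English description precedes it below -/
import Mathlib

section
/- Suppose the family (S_t)_{t≥0} given by S_t f = m_t · (f ∘ φ_t) is a strongly continuous semigroup of bounded operators on X, where (m_t)_{t≥0} is a family of holomorphic functions on Ω and φ is a global semiflow on Ω generated by a holomorphic function G. Assume the constant function e_0(z)=1 and the identity function e_1(z)=z belong to X. Then (m_t)_{t≥0} is a differentiable cocycle for φ, i.e. m_0(z)=1 for all z∈Ω, m_{t+s}(z)=m_t(z)·m_s(φ_t(z)) for all z∈Ω and t,s≥0, and t ↦ m_t(z) is continuous and differentiable for every z∈Ω; moreover the function g(z) := (∂/∂t m_t(z))|_{t=0} is holomorphic on Ω and m_t(z) = exp(∫₀ᵗ g(φ_s(z)) ds) for all t≥0 and z∈Ω. -/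
set_option maxHeartbeats 1000000

open Set Filter Topology MeasureTheory Metric intervalIntegral

private lemma auxIntInt' {f : ℝ → ℂ} (hf : ContinuousOn f (Ici 0)) {a b : ℝ}
    (ha : 0 ≤ a) (hb : 0 ≤ b) : IntervalIntegrable f volume a b :=
  (hf.mono (fun _ hx => (le_inf ha hb).trans hx.1)).intervalIntegrable


private lemma auxDeriv (Ω : Set ℂ) (hΩopen : IsOpen Ω) (m : ℝ → ℂ → ℂ)
    (hm_hol : ∀ t ≥ (0:ℝ), DifferentiableOn ℂ (m t) Ω)
    (hmc : ∀ w ∈ Ω, ContinuousOn (fun t : ℝ => m t w) (Ici 0))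
    (w₀ : ℂ) (ρ r : ℝ) (hρpos : 0 < ρ) (hr0 : 0 < r)
    (hcbΩ : closedBall w₀ (3*ρ) ⊆ Ω)
    (hsmb : ∀ s, 0 ≤ s → s ≤ r → ∀ w ∈ closedBall w₀ (3*ρ), ‖m s w‖ ≤ 3/2)
    (w₁ : ℂ) (hw₁ : w₁ ∈ ball w₀ (2*ρ)) :
    HasDerivAt (fun w => ∫ s in (0:ℝ)..r, m s w) (∫ s in (0:ℝ)..r, deriv (m s) w₁) w₁ := by
  have hb3 : ball w₀ (3*ρ) ⊆ Ω := ball_subset_closedBall.trans hcbΩ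
  have hmeasA : ∀ x ∈ Ω, AEStronglyMeasurable (fun s => m s x) (volume.restrict (uIoc (0:ℝ) r)) := by
    intro x hx
    rw [uIoc_of_le hr0.le]
    exact ((hmc x hx).mono (Ioc_subset_Ioi_self.trans Ioi_subset_Ici_self)).aestronglyMeasurable
      measurableSet_Ioc
  have hw₁3 : w₁ ∈ ball w₀ (3*ρ) := ball_subset_ball (by linarith) hw₁
  have hεpos : 0 < ρ/2 := by positivity
  have hballsub : ball w₁ (ρ/2) ⊆ ball w₀ (3*ρ) := by
    intro x hx
    rw [mem_ball] at hx hw₁ ⊢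
    calc dist x w₀ ≤ dist x w₁ + dist w₁ w₀ := dist_triangle _ _ _
      _ < ρ/2 + 2*ρ := by linarith
      _ ≤ 3*ρ := by linarith
  -- measurability of the derivative slice, via difference quotients
  have hF'_meas : AEStronglyMeasurable (fun s => deriv (m s) w₁) (volume.restrict (uIoc (0:ℝ) r)) := by
    have hcnpos : ∀ n : ℕ, 0 < ρ / (2*(n+2)) := fun n => by positivity
    have hcnlt : ∀ n : ℕ, ρ / (2*(n+2)) < ρ/2 := by
      intro n
      rw [div_lt_div_iff₀ (by positivity) (by norm_num)]
      nlinarith [Nat.cast_nonneg (α := ℝ) n, hρpos]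
    have hcnne : ∀ n : ℕ, ((ρ / (2*(n+2)) : ℝ) : ℂ) ≠ 0 := fun n => by
      rw [ne_eq, Complex.ofReal_eq_zero]
      exact (hcnpos n).ne'
    have hcnmem : ∀ n : ℕ, w₁ + ((ρ / (2*(n+2)) : ℝ) : ℂ) ∈ ball w₀ (3*ρ) := by
      intro n
      apply hballsub
      rw [mem_ball, dist_eq_norm, add_sub_cancel_left, Complex.norm_real,
        Real.norm_eq_abs, abs_of_pos (hcnpos n)]
      exact hcnlt n
    have hcn0 : Tendsto (fun n : ℕ => ((ρ / (2*(n+2)) : ℝ) : ℂ)) atTop (𝓝 0) := by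
      have h1 : Tendsto (fun n : ℕ => (ρ / (2*(n+2)) : ℝ)) atTop (𝓝 0) := by
        apply Tendsto.div_atTop (tendsto_const_nhds)
        apply Tendsto.const_mul_atTop (by norm_num : (0:ℝ) < 2)
        exact tendsto_atTop_add_const_right _ _ tendsto_natCast_atTop_atTop
      rw [show ((0:ℂ)) = ((0:ℝ):ℂ) by norm_num]
      exact (Complex.continuous_ofReal.tendsto _).comp h1
    have htend : Tendsto (fun n : ℕ => w₁ + ((ρ / (2*(n+2)) : ℝ) : ℂ)) atTop (𝓝[≠] w₁) := by
      rw [tendsto_nhdsWithin_iff]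
      refine ⟨by simpa using tendsto_const_nhds.add hcn0, ?_⟩
      apply Eventually.of_forall
      intro n
      simp only [mem_compl_iff, mem_singleton_iff]
      intro h
      exact hcnne n (by simpa using congrArg (fun x => x - w₁) h)
    apply aestronglyMeasurable_of_tendsto_ae (u := atTop)
      (f := fun (n : ℕ) (s : ℝ) =>
        (m s (w₁ + ((ρ / (2*(n+2)) : ℝ) : ℂ)) - m s w₁) * (((ρ / (2*(n+2)) : ℝ) : ℂ))⁻¹)
    · intro n
      exact ((hmeasA _ (hb3 (hcnmem n))).sub (hmeasA w₁ (hb3 hw₁3))).mul_const _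
    · rw [uIoc_of_le hr0.le, ae_restrict_iff' measurableSet_Ioc]
      apply ae_of_all
      intro s hs
      have hd : HasDerivAt (m s) (deriv (m s) w₁) w₁ :=
        (((hm_hol s hs.1.le).differentiableAt
          (hΩopen.mem_nhds (hb3 hw₁3)))).hasDerivAt
      rw [hasDerivAt_iff_tendsto_slope] at hd
      have hslope : ∀ n : ℕ, slope (m s) w₁ (w₁ + ((ρ / (2*(n+2)) : ℝ) : ℂ)) =
          (m s (w₁ + ((ρ / (2*(n+2)) : ℝ) : ℂ)) - m s w₁) * (((ρ / (2*(n+2)) : ℝ) : ℂ))⁻¹ := by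
        intro n; rw [slope_def_field, add_sub_cancel_left, div_eq_mul_inv]
      have := hd.comp htend
      simpa only [Function.comp_def, hslope] using this
  have key := intervalIntegral.hasDerivAt_integral_of_dominated_loc_of_deriv_le
    (𝕜 := ℂ) (μ := volume) (F := fun w s => m s w) (F' := fun w s => deriv (m s) w)
    (x₀ := w₁) (a := 0) (b := r) (bound := fun _ => (3/2)/(ρ/2)) (s := ball w₁ (ρ/2)) (ball_mem_nhds w₁ hεpos)
    ?_ ?_ hF'_meas ?_ ?_ ?_
  · exact key.2
  · -- hF_meas
    filter_upwards [isOpen_ball.eventually_mem hw₁3] with x hx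
    exact hmeasA x (hb3 hx)
  · -- hF_int
    exact auxIntInt' (hmc w₁ (hb3 hw₁3)) le_rfl hr0.le
  · -- h_bound
    apply ae_of_all
    intro s hs x hx
    rw [uIoc_of_le hr0.le] at hs
    have hxsub : closedBall x (ρ/2) ⊆ closedBall w₀ (3*ρ) := by
      intro y hy
      rw [mem_closedBall] at hy ⊢
      rw [mem_ball] at hx hw₁
      have h1 := dist_triangle y x w₁
      have h2 := dist_triangle x w₁ w₀
      have h3 := dist_triangle y x w₀
      have h4 := dist_triangle x w₁ w₀
      calc dist y w₀ ≤ dist y x + dist x w₀ := dist_triangle _ _ _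
        _ ≤ dist y x + (dist x w₁ + dist w₁ w₀) := by linarith
        _ ≤ ρ/2 + (ρ/2 + 2*ρ) := by
            have hx' := le_of_lt hx
            have hw' := le_of_lt hw₁
            linarith
        _ ≤ 3*ρ := by linarith
    apply Complex.norm_deriv_le_of_forall_mem_sphere_norm_le hεpos
    · exact DifferentiableOn.diffContOnCl_ball (hm_hol s hs.1.le) (hxsub.trans hcbΩ)
    · intro y hy
      exact hsmb s hs.1.le hs.2 y (hxsub (sphere_subset_closedBall hy))
  · exact intervalIntegrable_const
  · -- h_diff
    apply ae_of_all
    intro s hs x hx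
    rw [uIoc_of_le hr0.le] at hs
    have hxΩ : x ∈ Ω := hb3 (hballsub hx)
    exact ((hm_hol s hs.1.le).differentiableAt (hΩopen.mem_nhds hxΩ)).hasDerivAt


private lemma auxGen (Ω : Set ℂ) (hΩopen : IsOpen Ω)
    (G : ℂ → ℂ) (hG : DifferentiableOn ℂ G Ω)
    (φ : ℝ → ℂ → ℂ)
    (hφ_maps : ∀ t ≥ (0:ℝ), ∀ z ∈ Ω, φ t z ∈ Ω)
    (hφ_cont : ∀ z ∈ Ω, ContinuousOn (fun t : ℝ => φ t z) (Ici 0))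
    (hφ_ode : ∀ z ∈ Ω, ∀ t ≥ (0:ℝ),
      HasDerivWithinAt (fun s : ℝ => φ s z) (G (φ t z)) (Ici 0) t)
    (m : ℝ → ℂ → ℂ) (hm_hol : ∀ t ≥ (0:ℝ), DifferentiableOn ℂ (m t) Ω)
    (hco : ∀ t ≥ (0:ℝ), ∀ s ≥ (0:ℝ), ∀ z ∈ Ω, m (t + s) z = m t z * m s (φ t z))
    (hunif : ∀ K, K ⊆ Ω → IsCompact K → ∀ ε > 0, ∃ δ > 0,
      ∀ s, 0 ≤ s → s ≤ δ → ∀ w ∈ K, ‖m s w - 1‖ ≤ ε)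
    (hmc : ∀ w ∈ Ω, ContinuousOn (fun t : ℝ => m t w) (Ici 0)) :
    ∀ w₀ ∈ Ω, ∃ (c : ℂ → ℂ) (ρ : ℝ), 0 < ρ ∧ ball w₀ (2*ρ) ⊆ Ω ∧
      DifferentiableOn ℂ c (ball w₀ (2*ρ)) ∧
      ∀ z ∈ Ω, ∀ t₀ ≥ (0:ℝ), φ t₀ z ∈ ball w₀ (2*ρ) →
        HasDerivWithinAt (fun t : ℝ => m t z) (m t₀ z * c (φ t₀ z)) (Ici 0) t₀ := by
  intro w₀ hw₀
  -- choose radius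
  obtain ⟨ρ₀, hρ₀pos, hρ₀⟩ := Metric.isOpen_iff.1 hΩopen w₀ hw₀
  set ρ : ℝ := ρ₀ / 4 with hρdef
  have hρpos : 0 < ρ := by positivity
  have hcbΩ : closedBall w₀ (3*ρ) ⊆ Ω := by
    refine subset_trans ?_ hρ₀
    intro x hx
    rw [mem_closedBall] at hx
    rw [mem_ball]
    linarith
  have hbcb : ball w₀ (2*ρ) ⊆ closedBall w₀ (3*ρ) :=
    (ball_subset_ball (by linarith)).trans ball_subset_closedBall
  have hbΩ : ball w₀ (2*ρ) ⊆ Ω := hbcb.trans hcbΩ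
  have hb3 : ball w₀ (3*ρ) ⊆ Ω := ball_subset_closedBall.trans hcbΩ
  -- choose r
  obtain ⟨δ, hδpos, hδ⟩ := hunif (closedBall w₀ (3*ρ)) hcbΩ (isCompact_closedBall _ _)
    (1/2) (by norm_num)
  set r : ℝ := min δ 1 with hrdef
  have hr0 : 0 < r := lt_min hδpos one_pos
  have hsm : ∀ s, 0 ≤ s → s ≤ r → ∀ w ∈ closedBall w₀ (3*ρ), ‖m s w - 1‖ ≤ 1/2 :=
    fun s hs0 hsr w hw => hδ s hs0 (hsr.trans (min_le_left _ _)) w hw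
  have hsmb : ∀ s, 0 ≤ s → s ≤ r → ∀ w ∈ closedBall w₀ (3*ρ), ‖m s w‖ ≤ 3/2 := by
    intro s hs0 hsr w hw
    calc ‖m s w‖ = ‖(m s w - 1) + 1‖ := by ring_nf
      _ ≤ ‖m s w - 1‖ + ‖(1:ℂ)‖ := norm_add_le _ _
      _ ≤ 1/2 + 1 := by
          have := hsm s hs0 hsr w hw; simp only [norm_one]; linarith
      _ = 3/2 := by norm_num
  -- the denominator function
  set D : ℂ → ℂ := fun w => ∫ s in (0:ℝ)..r, m s w with hDdef
  have hDsub : ∀ w ∈ closedBall w₀ (3*ρ), ‖D w - (r:ℂ)‖ ≤ r/2 := by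
    intro w hw
    have hint : IntervalIntegrable (fun s => m s w) volume 0 r :=
      auxIntInt' (hmc w (hcbΩ hw)) le_rfl hr0.le
    have heq : D w - (r:ℂ) = ∫ s in (0:ℝ)..r, (m s w - 1) := by
      rw [intervalIntegral.integral_sub hint intervalIntegrable_const,
        intervalIntegral.integral_const]
      rw [sub_zero]
      simp [Complex.real_smul]
      rfl
    rw [heq]
    have := intervalIntegral.norm_integral_le_of_norm_le_const
      (C := 1/2) (f := fun s => m s w - 1) (a := 0) (b := r) ?_
    · calc _ ≤ (1/2) * |r - 0| := this
        _ = r/2 := by rw [sub_zero, abs_of_pos hr0]; ring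
    · intro x hx
      rw [uIoc_of_le hr0.le] at hx
      exact hsm x hx.1.le hx.2 w hw
  have hDne : ∀ w ∈ closedBall w₀ (3*ρ), D w ≠ 0 := by
    intro w hw
    have h1 := hDsub w hw
    have h2 : ‖(r:ℂ)‖ = r := by
      rw [Complex.norm_real, Real.norm_eq_abs, abs_of_pos hr0]
    have h4 : ‖(r:ℂ)‖ - ‖D w‖ ≤ ‖(r:ℂ) - D w‖ := norm_sub_norm_le _ _
    rw [norm_sub_rev] at h4
    intro h0
    rw [h0, norm_zero, h2] at h4
    rw [h0] at h1
    rw [zero_sub, norm_neg, h2] at h1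
    linarith
  -- differentiability of D
  have hDd : ∀ w₁ ∈ ball w₀ (2*ρ),
      HasDerivAt D (∫ s in (0:ℝ)..r, deriv (m s) w₁) w₁ := fun w₁ hw₁ =>
    auxDeriv Ω hΩopen m hm_hol hmc w₀ ρ r hρpos hr0 hcbΩ hsmb w₁ hw₁
  have hDdiff : DifferentiableOn ℂ D (ball w₀ (2*ρ)) :=
    fun w hw => ((hDd w hw).differentiableAt).differentiableWithinAt
  -- the cocycle-derivative function
  set c : ℂ → ℂ := fun w => ((m r w - 1) - G w * deriv D w) / D w with hcdef
  have hcdiff : DifferentiableOn ℂ c (ball w₀ (2*ρ)) := by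
    apply DifferentiableOn.div
    · apply DifferentiableOn.sub
      · exact ((hm_hol r hr0.le).mono hbΩ).sub (differentiableOn_const 1)
      · exact (hG.mono hbΩ).mul
          (((hDdiff.analyticOnNhd isOpen_ball).deriv).differentiableOn)
    · exact hDdiff
    · intro w hw; exact hDne w (hbcb hw)
  -- star identity
  have hstar : ∀ z ∈ Ω, ∀ t ≥ (0:ℝ), (∫ u in t..(t+r), m u z) = m t z * D (φ t z) := by
    intro z hz t ht
    have h1 : (∫ u in t..(t+r), m u z) = ∫ s in (0:ℝ)..r, m (t + s) z := by
      rw [intervalIntegral.integral_comp_add_left (fun u => m u z) t]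
      norm_num
    rw [h1]
    have h2 : EqOn (fun s => m (t + s) z) (fun s => m t z * m s (φ t z)) (uIcc 0 r) := by
      intro s hs
      rw [uIcc_of_le hr0.le] at hs
      exact hco t ht s hs.1 z hz
    rw [intervalIntegral.integral_congr h2, intervalIntegral.integral_const_mul]
  refine ⟨c, ρ, hρpos, hbΩ, hcdiff, ?_⟩
  -- main derivative computation
  intro z hz t₀ ht₀ hw₁
  set w₁ := φ t₀ z with hw₁def
  set F : ℝ → ℂ := fun t => ∫ u in (0:ℝ)..t, m u z with hFdef
  have hFd : ∀ τ ≥ (0:ℝ), HasDerivWithinAt F (m τ z) (Ici 0) τ := by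
    intro τ hτ
    rcases eq_or_lt_of_le hτ with h0 | hpos
    · subst h0
      exact intervalIntegral.integral_hasDerivWithinAt_right
        (auxIntInt' (hmc z hz) le_rfl le_rfl)
        ⟨Ioi 0, self_mem_nhdsWithin,
          ((hmc z hz).mono Ioi_subset_Ici_self).aestronglyMeasurable measurableSet_Ioi⟩
        (((hmc z hz) 0 self_mem_Ici).mono Ioi_subset_Ici_self)
    · exact (intervalIntegral.integral_hasDerivAt_right
        (auxIntInt' (hmc z hz) le_rfl hτ)
        ⟨Ioi 0, Ioi_mem_nhds hpos,
          ((hmc z hz).mono Ioi_subset_Ici_self).aestronglyMeasurable measurableSet_Ioi⟩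
        ((hmc z hz).continuousAt (Ici_mem_nhds hpos))).hasDerivWithinAt
  set N : ℝ → ℂ := fun t => F (t + r) - F t with hNdef
  have hNeq : ∀ t ≥ (0:ℝ), N t = m t z * D (φ t z) := by
    intro t ht
    have h1 : N t = ∫ u in t..(t+r), m u z := by
      rw [hNdef]
      exact intervalIntegral.integral_interval_sub_left
        (auxIntInt' (hmc z hz) le_rfl (by linarith))
        (auxIntInt' (hmc z hz) le_rfl ht)
    rw [h1, hstar z hz t ht]
  have hshift : HasDerivWithinAt (fun t : ℝ => F (t + r)) (m (t₀ + r) z) (Ici 0) t₀ := by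
    have h1 := hFd (t₀ + r) (by linarith)
    have h2 : HasDerivWithinAt (fun t : ℝ => t + r) 1 (Ici 0) t₀ :=
      (hasDerivWithinAt_id _ _).add_const r
    have h3 : MapsTo (fun t : ℝ => t + r) (Ici 0) (Ici 0) := fun x hx => by
      simp only [mem_Ici] at hx ⊢; linarith
    have := HasDerivWithinAt.scomp_of_eq t₀ h1 h2 h3 rfl
    rw [one_smul] at this
    exact this
  have hN : HasDerivWithinAt N (m (t₀ + r) z - m t₀ z) (Ici 0) t₀ :=
    hshift.sub (hFd t₀ ht₀)
  have hDcomp : HasDerivWithinAt (fun t : ℝ => D (φ t z)) (G w₁ • deriv D w₁) (Ici 0) t₀ := by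
    have houter : HasDerivAt D (deriv D w₁) w₁ := (hDd w₁ hw₁).differentiableAt.hasDerivAt
    exact houter.scomp_hasDerivWithinAt t₀ (hφ_ode z hz t₀ ht₀)
  have hne : D w₁ ≠ 0 := hDne w₁ (hbcb hw₁)
  have hQ := hN.div hDcomp (by exact hne)
  have hEv : (fun t => m t z) =ᶠ[𝓝[Ici 0] t₀] fun t => N t / D (φ t z) := by
    have hball : ∀ᶠ t in 𝓝[Ici 0] t₀, φ t z ∈ ball w₀ (3*ρ) :=
      (hφ_cont z hz t₀ ht₀).eventually
        (isOpen_ball.eventually_mem (ball_subset_ball (by linarith) hw₁))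
    filter_upwards [hball, self_mem_nhdsWithin] with t hb ht
    have := hNeq t ht
    rw [eq_div_iff (hDne _ (ball_subset_closedBall hb))]
    exact this.symm
  have hAt : m t₀ z = N t₀ / D (φ t₀ z) := by
    rw [eq_div_iff hne]
    exact (hNeq t₀ ht₀).symm
  have hm' := hQ.congr_of_eventuallyEq hEv hAt
  have e1 : m (t₀ + r) z = m t₀ z * m r w₁ := hco t₀ ht₀ r hr0.le z hz
  have e2 : N t₀ = m t₀ z * D w₁ := hNeq t₀ ht₀
  refine hm'.congr_deriv ?_
  rw [e1, e2, hcdef]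
  rw [← hw₁def]
  simp only [smul_eq_mul]
  field_simp

private lemma auxFTC {f : ℝ → ℂ} (hf : ContinuousOn f (Ici 0)) :
    ∀ τ ≥ (0:ℝ), HasDerivWithinAt (fun t => ∫ u in (0:ℝ)..t, f u) (f τ) (Ici 0) τ := by
  intro τ hτ
  rcases eq_or_lt_of_le hτ with h0 | hpos
  · subst h0
    exact integral_hasDerivWithinAt_right
      (auxIntInt' hf le_rfl le_rfl)
      ⟨Ioi 0, self_mem_nhdsWithin,
        (hf.mono Ioi_subset_Ici_self).aestronglyMeasurable measurableSet_Ioi⟩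
      ((hf 0 self_mem_Ici).mono Ioi_subset_Ici_self)
  · exact (integral_hasDerivAt_right (auxIntInt' hf le_rfl hτ)
      ⟨Ioi 0, Ioi_mem_nhds hpos,
        (hf.mono Ioi_subset_Ici_self).aestronglyMeasurable measurableSet_Ioi⟩
      (hf.continuousAt (Ici_mem_nhds hpos))).hasDerivWithinAt

private lemma auxCont (Ω : Set ℂ) (φ : ℝ → ℂ → ℂ) (m : ℝ → ℂ → ℂ)
    (hφ_maps : ∀ t ≥ (0:ℝ), ∀ z ∈ Ω, φ t z ∈ Ω)
    (hφ_cont : ∀ z ∈ Ω, ContinuousOn (fun t : ℝ => φ t z) (Ici 0))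
    (hco : ∀ t ≥ (0:ℝ), ∀ s ≥ (0:ℝ), ∀ z ∈ Ω, m (t + s) z = m t z * m s (φ t z))
    (hunif : ∀ K, K ⊆ Ω → IsCompact K → ∀ ε > 0, ∃ δ > 0,
      ∀ s, 0 ≤ s → s ≤ δ → ∀ w ∈ K, ‖m s w - 1‖ ≤ ε) :
    ∀ z ∈ Ω, ContinuousOn (fun t : ℝ => m t z) (Ici 0) := by
  intro z hz t₀ ht₀
  rw [Metric.continuousWithinAt_iff]
  intro ε hε
  set M := ‖m t₀ z‖ with hM
  set K : Set ℂ := (fun s : ℝ => φ s z) '' (Icc 0 (t₀ + 1)) with hK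
  have hKΩ : K ⊆ Ω := by
    rintro w ⟨s, hs, rfl⟩; exact hφ_maps s hs.1 z hz
  have hKc : IsCompact K :=
    isCompact_Icc.image_of_continuousOn ((hφ_cont z hz).mono (Icc_subset_Ici_self))
  set ε₁ : ℝ := min (ε / (2 * (M + 1) + 1)) (1/2) with hε₁
  have hε₁pos : 0 < ε₁ := by
    apply lt_min _ (by norm_num)
    apply div_pos hε
    positivity
  have hε₁half : ε₁ ≤ 1/2 := min_le_right _ _
  have hbound : 2 * (M + 1) * ε₁ < ε := by
    have h1 : ε₁ ≤ ε / (2 * (M + 1) + 1) := min_le_left _ _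
    have h2 : (0:ℝ) < 2 * (M + 1) + 1 := by positivity
    calc 2 * (M + 1) * ε₁ ≤ 2 * (M + 1) * (ε / (2 * (M + 1) + 1)) := by
          apply mul_le_mul_of_nonneg_left h1; positivity
      _ < ε := by
          rw [mul_div_assoc']
          rw [div_lt_iff₀ h2]
          nlinarith [norm_nonneg (m t₀ z)]
  obtain ⟨δ, hδpos, hδ⟩ := hunif K hKΩ hKc ε₁ hε₁pos
  refine ⟨min δ 1, by positivity, ?_⟩
  intro t ht hdist
  rw [Real.dist_eq] at hdist
  have hd1 : |t - t₀| ≤ δ := le_of_lt (lt_of_lt_of_le hdist (min_le_left _ _))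
  have hd2 : |t - t₀| ≤ 1 := le_of_lt (lt_of_lt_of_le hdist (min_le_right _ _))
  rw [dist_eq_norm]
  have hMnn : 0 ≤ M := norm_nonneg _
  rcases le_total t₀ t with hle | hle
  · -- t₀ ≤ t
    have hs : 0 ≤ t - t₀ := sub_nonneg.2 hle
    have heq : m t z = m t₀ z * m (t - t₀) (φ t₀ z) := by
      have := hco t₀ ht₀ (t - t₀) hs z hz
      rwa [add_sub_cancel] at this
    have hφK : φ t₀ z ∈ K := ⟨t₀, ⟨ht₀, by linarith⟩, rfl⟩
    have hsmall : ‖m (t - t₀) (φ t₀ z) - 1‖ ≤ ε₁ := by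
      apply hδ _ hs _ _ hφK
      rwa [abs_of_nonneg hs] at hd1
    calc ‖m t z - m t₀ z‖ = ‖m t₀ z‖ * ‖m (t - t₀) (φ t₀ z) - 1‖ := by
          rw [heq, ← norm_mul]; ring_nf
      _ ≤ M * ε₁ := mul_le_mul_of_nonneg_left hsmall hMnn
      _ ≤ 2 * (M + 1) * ε₁ := by nlinarith
      _ < ε := hbound
  · -- t ≤ t₀
    have hs : 0 ≤ t₀ - t := sub_nonneg.2 hle
    have heq : m t₀ z = m t z * m (t₀ - t) (φ t z) := by
      have := hco t ht (t₀ - t) hs z hz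
      rwa [add_sub_cancel] at this
    have hφK : φ t z ∈ K := ⟨t, ⟨ht, by linarith⟩, rfl⟩
    set c := m (t₀ - t) (φ t z) with hc
    have hsmall : ‖c - 1‖ ≤ ε₁ := by
      apply hδ _ hs _ _ hφK
      rwa [abs_sub_comm, abs_of_nonneg hs] at hd1
    have hcge : (1:ℝ)/2 ≤ ‖c‖ := by
      have := norm_sub_norm_le (c - 1) c
      simp only [sub_sub_cancel_left, norm_neg, norm_one] at this
      have h1c : ‖c‖ ≥ 1 - ‖c - 1‖ := by
        have := norm_sub_norm_le (1:ℂ) c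
        calc 1 - ‖c - 1‖ ≤ 1 - |1 - ‖c‖| := by
              have : |1 - ‖c‖|  ≤ ‖c - 1‖ := by
                rw [show (1:ℝ) = ‖(1:ℂ)‖ by simp, norm_sub_rev]
                exact abs_norm_sub_norm_le 1 c
              linarith
          _ ≤ ‖c‖ := by rcases abs_cases (1 - ‖c‖) with ⟨h, _⟩ | ⟨h, _⟩ <;> linarith
      linarith
    have hmt : ‖m t z‖ ≤ 2 * M := by
      have : M = ‖m t z‖ * ‖c‖ := by rw [hM, heq, norm_mul]
      nlinarith [norm_nonneg (m t z)]
    have hdiff : m t z - m t₀ z = m t z * (1 - c) := by rw [heq]; ring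
    calc ‖m t z - m t₀ z‖ = ‖m t z‖ * ‖1 - c‖ := by rw [hdiff, norm_mul]
      _ ≤ 2 * M * ε₁ := by
          apply mul_le_mul hmt _ (norm_nonneg _) (by positivity)
          rwa [norm_sub_rev]
      _ ≤ 2 * (M + 1) * ε₁ := by nlinarith
      _ < ε := hbound

/-- If the weighted composition family `S_t f = m_t · (f ∘ φ_t)` is a
strongly continuous semigroup on a Banach space `X` embedding continuously in `Hol(Ω)`
containing `e₀` and `e₁`, then `(m_t)` is a differentiable cocycle for the semiflow `φ`,
`g(z) = ∂/∂t m_t(z)|_{t=0}` is holomorphic, and `m_t(z) = exp (∫₀ᵗ g (φ_s z) ds)`. -/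
theorem weighted_composition_semigroup_cocycle
    -- Ω : nonempty open simply connected subset of ℂ
    (Ω : Set ℂ) (hΩne : Ω.Nonempty) (hΩopen : IsOpen Ω)
    (hΩsc : SimplyConnectedSpace Ω)
    -- X : complex Banach space embedding continuously in Hol(Ω)
    (X : Type*) [NormedAddCommGroup X] [NormedSpace ℂ X] [CompleteSpace X]
    (ι : X →ₗ[ℂ] (ℂ → ℂ)) (hι_inj : Function.Injective ι)
    (hι_hol : ∀ f : X, DifferentiableOn ℂ (ι f) Ω)
    (hι_emb : ∀ K ⊆ Ω, IsCompact K → ∃ C > 0, ∀ f : X, ∀ z ∈ K, ‖ι f z‖ ≤ C * ‖f‖)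
    -- φ : global semiflow on Ω generated by the holomorphic function G
    (G : ℂ → ℂ) (hG : DifferentiableOn ℂ G Ω)
    (φ : ℝ → ℂ → ℂ)
    (hφ_maps : ∀ t ≥ (0:ℝ), ∀ z ∈ Ω, φ t z ∈ Ω)
    (hφ_zero : ∀ z ∈ Ω, φ 0 z = z)
    (hφ_add : ∀ t ≥ (0:ℝ), ∀ s ≥ (0:ℝ), ∀ z ∈ Ω, φ (t + s) z = φ t (φ s z))
    (hφ_hol : ∀ t ≥ (0:ℝ), DifferentiableOn ℂ (fun z => φ t z) Ω)
    (hφ_cont : ∀ z ∈ Ω, ContinuousOn (fun t : ℝ => φ t z) (Ici 0))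
    (hφ_ode : ∀ z ∈ Ω, ∀ t ≥ (0:ℝ),
      HasDerivWithinAt (fun s : ℝ => φ s z) (G (φ t z)) (Ici 0) t)
    -- (m_t) : family of holomorphic functions on Ω
    (m : ℝ → ℂ → ℂ) (hm_hol : ∀ t ≥ (0:ℝ), DifferentiableOn ℂ (m t) Ω)
    -- e₀, e₁ ∈ X
    (e₀ e₁ : X) (he₀ : ∀ z ∈ Ω, ι e₀ z = 1) (he₁ : ∀ z ∈ Ω, ι e₁ z = z)
    -- (S_t) : strongly continuous semigroup of bounded operators on X
    (S : ℝ → X →L[ℂ] X)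
    (hS_zero : S 0 = ContinuousLinearMap.id ℂ X)
    (hS_add : ∀ t ≥ (0:ℝ), ∀ s ≥ (0:ℝ), S (t + s) = (S t).comp (S s))
    (hS_cont : ∀ f : X, Tendsto (fun t : ℝ => S t f) (𝓝[>] 0) (𝓝 f))
    -- S_t f = m_t · (f ∘ φ_t)
    (hS_rep : ∀ t ≥ (0:ℝ), ∀ f : X, ∀ z ∈ Ω, ι (S t f) z = m t z * ι f (φ t z)) :
    -- (m_t) is a differentiable cocycle for φ:
    (∀ z ∈ Ω, m 0 z = 1) ∧
    (∀ t ≥ (0:ℝ), ∀ s ≥ (0:ℝ), ∀ z ∈ Ω, m (t + s) z = m t z * m s (φ t z)) ∧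
    (∀ z ∈ Ω, ContinuousOn (fun t : ℝ => m t z) (Ici 0)) ∧
    (∀ z ∈ Ω, ∀ t ≥ (0:ℝ), DifferentiableWithinAt ℝ (fun s : ℝ => m s z) (Ici 0) t) ∧
    -- moreover g := ∂/∂t m_t(z)|_{t=0} is holomorphic and m_t = exp(∫₀ᵗ g(φ_s(z)) ds)
    ∃ g : ℂ → ℂ, DifferentiableOn ℂ g Ω ∧
      (∀ z ∈ Ω, HasDerivWithinAt (fun t : ℝ => m t z) (g z) (Ici 0) 0) ∧
      (∀ t ≥ (0:ℝ), ∀ z ∈ Ω, m t z = Complex.exp (∫ s in (0:ℝ)..t, g (φ s z))) := by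
  -- basic scalar identities
  have hmS : ∀ t ≥ (0:ℝ), ∀ z ∈ Ω, m t z = ι (S t e₀) z := by
    intro t ht z hz
    rw [hS_rep t ht e₀ z hz, he₀ (φ t z) (hφ_maps t ht z hz), mul_one]
  have hm0 : ∀ z ∈ Ω, m 0 z = 1 := by
    intro z hz
    rw [hmS 0 le_rfl z hz, hS_zero]
    simpa using he₀ z hz
  have hco : ∀ t ≥ (0:ℝ), ∀ s ≥ (0:ℝ), ∀ z ∈ Ω, m (t + s) z = m t z * m s (φ t z) := by
    intro t ht s hs z hz
    have h1 := hmS (t + s) (add_nonneg ht hs) z hz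
    rw [hS_add t ht s hs, ContinuousLinearMap.comp_apply] at h1
    rw [h1, hS_rep t ht ((S s) e₀) z hz, ← hmS s hs (φ t z) (hφ_maps t ht z hz)]
  have hunif : ∀ K, K ⊆ Ω → IsCompact K → ∀ ε > 0, ∃ δ > 0,
      ∀ s, 0 ≤ s → s ≤ δ → ∀ w ∈ K, ‖m s w - 1‖ ≤ ε := by
    intro K hK hKc ε hε
    obtain ⟨C, hCpos, hC⟩ := hι_emb K hK hKc
    have h1 := hS_cont e₀
    rw [Metric.tendsto_nhdsWithin_nhds] at h1
    obtain ⟨δ, hδpos, hδ⟩ := h1 (ε / C) (by positivity)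
    refine ⟨δ/2, by positivity, ?_⟩
    intro s hs0 hsδ w hw
    rcases eq_or_lt_of_le hs0 with h0 | hpos
    · rw [← h0, hm0 w (hK hw)]
      simpa using hε.le
    · have h2 := hδ (mem_Ioi.2 hpos)
        (by rw [Real.dist_eq, sub_zero, abs_of_pos hpos]; linarith)
      rw [dist_eq_norm] at h2
      calc ‖m s w - 1‖ = ‖ι (S s e₀ - e₀) w‖ := by
            rw [hmS s hs0 w (hK hw),
              show (1:ℂ) = ι e₀ w from (he₀ w (hK hw)).symm, map_sub, Pi.sub_apply]
        _ ≤ C * ‖S s e₀ - e₀‖ := hC _ w hw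
        _ ≤ C * (ε / C) := mul_le_mul_of_nonneg_left h2.le hCpos.le
        _ = ε := by field_simp
  have hmc : ∀ z ∈ Ω, ContinuousOn (fun t : ℝ => m t z) (Ici 0) :=
    auxCont Ω φ m hφ_maps hφ_cont hco hunif
  have hgen := auxGen Ω hΩopen G hG φ hφ_maps hφ_cont hφ_ode m hm_hol hco hunif hmc
  set g : ℂ → ℂ := fun w => derivWithin (fun t : ℝ => m t w) (Ici 0) 0 with hgdef
  have hUD : UniqueDiffWithinAt ℝ (Ici (0:ℝ)) 0 := uniqueDiffOn_Ici 0 0 self_mem_Ici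
  have hgd : ∀ z ∈ Ω, ∀ t ≥ (0:ℝ),
      HasDerivWithinAt (fun t : ℝ => m t z) (m t z * g (φ t z)) (Ici 0) t := by
    intro z hz t ht
    obtain ⟨c, ρ, hρ, hbΩ, hcdiff, hprop⟩ := hgen (φ t z) (hφ_maps t ht z hz)
    have hmem : φ t z ∈ ball (φ t z) (2*ρ) := mem_ball_self (by positivity)
    have h1 := hprop z hz t ht hmem
    have h2 := hprop (φ t z) (hφ_maps t ht z hz) 0 le_rfl
      (by rw [hφ_zero _ (hφ_maps t ht z hz)]; exact hmem)
    rw [hφ_zero _ (hφ_maps t ht z hz), hm0 _ (hφ_maps t ht z hz), one_mul] at h2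
    have hg_eq : g (φ t z) = c (φ t z) := h2.derivWithin hUD
    rw [hg_eq]
    exact h1
  have hg0 : ∀ z ∈ Ω, HasDerivWithinAt (fun t : ℝ => m t z) (g z) (Ici 0) 0 := by
    intro z hz
    have h := hgd z hz 0 le_rfl
    rwa [hφ_zero z hz, hm0 z hz, one_mul] at h
  have hgdiff : DifferentiableOn ℂ g Ω := by
    intro w₀ hw₀
    obtain ⟨c, ρ, hρ, hbΩ, hcdiff, hprop⟩ := hgen w₀ hw₀
    have hmem : w₀ ∈ ball w₀ (2*ρ) := mem_ball_self (by positivity)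
    have hg_eqon : ∀ w ∈ ball w₀ (2*ρ), g w = c w := by
      intro w hw
      have hwΩ := hbΩ hw
      have h2 := hprop w hwΩ 0 le_rfl (by rw [hφ_zero w hwΩ]; exact hw)
      rw [hφ_zero w hwΩ, hm0 w hwΩ, one_mul] at h2
      exact h2.derivWithin hUD
    have hc_at : DifferentiableAt ℂ c w₀ :=
      (hcdiff w₀ hmem).differentiableAt (isOpen_ball.mem_nhds hmem)
    exact (hc_at.congr_of_eventuallyEq
      (eventually_of_mem (isOpen_ball.mem_nhds hmem) hg_eqon)).differentiableWithinAt
  have hexp : ∀ t ≥ (0:ℝ), ∀ z ∈ Ω,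
      m t z = Complex.exp (∫ s in (0:ℝ)..t, g (φ s z)) := by
    intro t ht z hz
    have hgφc : ContinuousOn (fun s : ℝ => g (φ s z)) (Ici 0) := by
      apply (hgdiff.continuousOn).comp (hφ_cont z hz)
      intro s hs
      exact hφ_maps s hs z hz
    have hId : ∀ τ ≥ (0:ℝ),
        HasDerivWithinAt (fun τ => ∫ s in (0:ℝ)..τ, g (φ s z)) (g (φ τ z)) (Ici 0) τ :=
      auxFTC hgφc
    have hIc : ContinuousOn (fun τ => ∫ s in (0:ℝ)..τ, g (φ s z)) (Ici 0) :=
      fun τ hτ => (hId τ hτ).continuousWithinAt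
    set u : ℝ → ℂ :=
      fun τ => m τ z * Complex.exp (-(∫ s in (0:ℝ)..τ, g (φ s z))) with hudef
    have hu0 : u 0 = 1 := by
      rw [hudef]
      simp [hm0 z hz]
    have huc : ContinuousOn u (Icc 0 t) := by
      apply ContinuousOn.mul ((hmc z hz).mono Icc_subset_Ici_self)
      exact ((hIc.mono Icc_subset_Ici_self).neg).cexp
    have hud : ∀ x ∈ Ico 0 t, HasDerivWithinAt u 0 (Ici x) x := by
      intro x hx
      have hm' := (hgd z hz x hx.1).mono (Ici_subset_Ici.2 hx.1)
      have hI' := (((hId x hx.1).mono (Ici_subset_Ici.2 hx.1)).neg).cexp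
      have hmul := hm'.mul hI'
      refine hmul.congr_deriv ?_
      ring
    have hconst := constant_of_has_deriv_right_zero huc hud t (right_mem_Icc.2 ht)
    rw [hu0] at hconst
    have h4 : m t z * Complex.exp (-(∫ s in (0:ℝ)..t, g (φ s z))) = 1 := hconst
    calc m t z = m t z * (Complex.exp (-(∫ s in (0:ℝ)..t, g (φ s z))) *
          Complex.exp (∫ s in (0:ℝ)..t, g (φ s z))) := by
          rw [← Complex.exp_add, neg_add_cancel, Complex.exp_zero, mul_one]
      _ = Complex.exp (∫ s in (0:ℝ)..t, g (φ s z)) := by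
          rw [← mul_assoc, h4, one_mul]
  exact ⟨hm0, hco, hmc, fun z hz t ht => (hgd z hz t ht).differentiableWithinAt,
    g, hgdiff, hg0, hexp⟩
end

section
/- Let X be a complex Banach space embedding continuously in Hol(𝔻). Let (S_t)_{t≥0}, defined by S_t f = m_t·(f∘φ_t) with φ a global semiflow on 𝔻 generated by G ∈ Hol(𝔻), be a strongly continuous semigroup on X with generator Γ, and assume e_n ∈ D(Γ) for all n ∈ ℕ₀ (where e_n(z)=zⁿ). Assume: (a) there exists C > 0 such that for every bounded holomorphic h on 𝔻 and f ∈ X, h·f ∈ X and ‖hf‖_X ≤ C (sup_{𝔻}|h|) ‖f‖_X; (b) e_n·f ∈ X for all f ∈ X and n ∈ ℕ; (c) for every n ∈ ℕ there exists C_n > 0 with C_n‖f‖_X ≤ ‖e_n f‖_X for all f ∈ X; (d) lim_{n→∞} ‖e_n‖_X/(n C_n) = 0. Then there is a holomorphic g : 𝔻 → ℂ with m_t(z) = exp(∫₀ᵗ g(φ_s(z)) ds), and if g is bounded on 𝔻, then Γ is a bounded operator (i.e. there exists C′ > 0 with ‖Γf‖_X ≤ C′‖f‖_X for all f ∈ D(Γ))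 if and only if G ≡ 0 on 𝔻. -/
open Set Filter Topology

/-- Under conditions (a)–(d) on `X ↪ Hol(𝔻)`, if the weighted
composition family `S_t f = m_t·(f∘φ_t)` is a strongly continuous semigroup with
generator `Γ` whose domain contains all monomials `e_n`, then
`m_t(z) = exp(∫₀ᵗ g(φ_s z) ds)` for a holomorphic `g`, and, when `g` is bounded,
`Γ` is a bounded operator if and only if `G ≡ 0`. -/
theorem generator_bounded_iff_G_zero
    -- X : complex Banach space embedding continuously in Hol(𝔻)
    (X : Type*) [NormedAddCommGroup X] [NormedSpace ℂ X] [CompleteSpace X]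
    (ι : X →ₗ[ℂ] (ℂ → ℂ)) (hι_inj : Function.Injective ι)
    (hι_hol : ∀ f : X, DifferentiableOn ℂ (ι f) (Metric.ball (0:ℂ) 1))
    (hι_emb : ∀ K ⊆ Metric.ball (0:ℂ) 1, IsCompact K →
      ∃ C > 0, ∀ f : X, ∀ z ∈ K, ‖ι f z‖ ≤ C * ‖f‖)
    -- φ : global semiflow on 𝔻 generated by the holomorphic function G
    (G : ℂ → ℂ) (hG : DifferentiableOn ℂ G (Metric.ball (0:ℂ) 1))
    (φ : ℝ → ℂ → ℂ)
    (hφ_maps : ∀ t ≥ (0:ℝ), ∀ z ∈ Metric.ball (0:ℂ) 1, φ t z ∈ Metric.ball (0:ℂ) 1)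
    (hφ_zero : ∀ z ∈ Metric.ball (0:ℂ) 1, φ 0 z = z)
    (hφ_add : ∀ t ≥ (0:ℝ), ∀ s ≥ (0:ℝ), ∀ z ∈ Metric.ball (0:ℂ) 1,
      φ (t + s) z = φ t (φ s z))
    (hφ_hol : ∀ t ≥ (0:ℝ), DifferentiableOn ℂ (fun z => φ t z) (Metric.ball (0:ℂ) 1))
    (hφ_cont : ∀ z ∈ Metric.ball (0:ℂ) 1, ContinuousOn (fun t : ℝ => φ t z) (Ici 0))
    (hφ_ode : ∀ z ∈ Metric.ball (0:ℂ) 1, ∀ t ≥ (0:ℝ),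
      HasDerivWithinAt (fun s : ℝ => φ s z) (G (φ t z)) (Ici 0) t)
    -- (m_t) : family of holomorphic functions on 𝔻
    (m : ℝ → ℂ → ℂ)
    (hm_hol : ∀ t ≥ (0:ℝ), DifferentiableOn ℂ (m t) (Metric.ball (0:ℂ) 1))
    -- (S_t) : strongly continuous semigroup on X, S_t f = m_t · (f ∘ φ_t)
    (S : ℝ → X →L[ℂ] X)
    (hS_zero : S 0 = ContinuousLinearMap.id ℂ X)
    (hS_add : ∀ t ≥ (0:ℝ), ∀ s ≥ (0:ℝ), S (t + s) = (S t).comp (S s))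
    (hS_cont : ∀ f : X, Tendsto (fun t : ℝ => S t f) (𝓝[>] 0) (𝓝 f))
    (hS_rep : ∀ t ≥ (0:ℝ), ∀ f : X, ∀ z ∈ Metric.ball (0:ℂ) 1,
      ι (S t f) z = m t z * ι f (φ t z))
    -- (Γ, 𝒟) : the infinitesimal generator of (S_t)
    (Γ : X → X) (𝒟 : Set X)
    (h𝒟 : ∀ f : X, f ∈ 𝒟 ↔
      ∃ L : X, Tendsto (fun t : ℝ => (1 / (t:ℂ)) • (S t f - f)) (𝓝[>] 0) (𝓝 L))
    (hΓ : ∀ f ∈ 𝒟,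
      Tendsto (fun t : ℝ => (1 / (t:ℂ)) • (S t f - f)) (𝓝[>] 0) (𝓝 (Γ f)))
    -- the monomials e_n belong to D(Γ)
    (e : ℕ → X) (he : ∀ n : ℕ, ∀ z ∈ Metric.ball (0:ℂ) 1, ι (e n) z = z ^ n)
    (he𝒟 : ∀ n : ℕ, e n ∈ 𝒟)
    -- (a) : ∃ C > 0 with ‖h f‖_X ≤ C ‖h‖_∞ ‖f‖_X for bounded holomorphic h
    (hmul : ∃ C > (0:ℝ), ∀ h : ℂ → ℂ, DifferentiableOn ℂ h (Metric.ball (0:ℂ) 1) →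
      ∀ B : ℝ, (∀ z ∈ Metric.ball (0:ℂ) 1, ‖h z‖ ≤ B) →
      ∀ f : X, ∃ p : X, (∀ z ∈ Metric.ball (0:ℂ) 1, ι p z = h z * ι f z) ∧
        ‖p‖ ≤ C * B * ‖f‖)
    -- (b) : e_n f ∈ X for all f ∈ X, n ∈ ℕ
    (hmon : ∀ n : ℕ, 1 ≤ n → ∀ f : X,
      ∃ p : X, ∀ z ∈ Metric.ball (0:ℂ) 1, ι p z = z ^ n * ι f z)
    -- (c) : C_n ‖f‖_X ≤ ‖e_n f‖_X
    (Cn : ℕ → ℝ) (hCn_pos : ∀ n : ℕ, 1 ≤ n → 0 < Cn n)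
    (hCn : ∀ n : ℕ, 1 ≤ n → ∀ f p : X,
      (∀ z ∈ Metric.ball (0:ℂ) 1, ι p z = z ^ n * ι f z) → Cn n * ‖f‖ ≤ ‖p‖)
    -- (d) : ‖e_n‖_X / (n C_n) → 0
    (hd : Tendsto (fun n : ℕ => ‖e n‖ / (n * Cn n)) atTop (𝓝 0)) :
    -- conclusion
    ∃ g : ℂ → ℂ, DifferentiableOn ℂ g (Metric.ball (0:ℂ) 1) ∧
      (∀ t ≥ (0:ℝ), ∀ z ∈ Metric.ball (0:ℂ) 1,
        m t z = Complex.exp (∫ s in (0:ℝ)..t, g (φ s z))) ∧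
      ((∃ Bg : ℝ, ∀ z ∈ Metric.ball (0:ℂ) 1, ‖g z‖ ≤ Bg) →
        ((∃ C' > (0:ℝ), ∀ f ∈ 𝒟, ‖Γ f‖ ≤ C' * ‖f‖) ↔
          (∀ z ∈ Metric.ball (0:ℂ) 1, G z = 0))) := by
  classical
  obtain ⟨C, hC_pos, hmulC⟩ := hmul
  set 𝔻 : Set ℂ := Metric.ball (0:ℂ) 1 with h𝔻def
  -- point evaluation bound
  have hpt : ∀ w ∈ 𝔻, ∃ Cw > (0:ℝ), ∀ u : X, ‖ι u w‖ ≤ Cw * ‖u‖ := by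
    intro w hw
    obtain ⟨Cw, hCw, hb⟩ := hι_emb {w} (singleton_subset_iff.2 hw) isCompact_singleton
    exact ⟨Cw, hCw, fun u => hb u w rfl⟩
  have hι_sub : ∀ (u v : X) (w : ℂ), ι (u - v) w = ι u w - ι v w := by
    intro u v w; rw [map_sub]; rfl
  have hι_smul : ∀ (c : ℂ) (u : X) (w : ℂ), ι (c • u) w = c * ι u w := by
    intro c u w; rw [map_smul]; rfl
  have hpt_tendsto : ∀ w ∈ 𝔻, ∀ (l : Filter ℝ) (u : ℝ → X) (L : X),
      Tendsto u l (𝓝 L) → Tendsto (fun i => ι (u i) w) l (𝓝 (ι L w)) := by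
    intro w hw l u L hu
    obtain ⟨Cw, hCw, hb⟩ := hpt w hw
    rw [tendsto_iff_norm_sub_tendsto_zero] at hu ⊢
    refine squeeze_zero (fun i => norm_nonneg _) (fun i => ?_)
      (by simpa using hu.const_mul Cw)
    rw [← hι_sub]
    exact hb _
  have he0 : ∀ w ∈ 𝔻, ι (e 0) w = 1 := by intro w hw; simpa using he 0 w hw
  have hm_eval : ∀ t ≥ (0:ℝ), ∀ z ∈ 𝔻, ι (S t (e 0)) z = m t z := by
    intro t ht z hz
    rw [hS_rep t ht (e 0) z hz, he0 _ (hφ_maps t ht z hz), mul_one]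
  have hm0 : ∀ z ∈ 𝔻, m 0 z = 1 := by
    intro z hz
    have h1 := hm_eval 0 le_rfl z hz
    rw [hS_zero] at h1
    rw [← h1]
    exact he0 z hz
  have hcoc : ∀ t ≥ (0:ℝ), ∀ s ≥ (0:ℝ), ∀ z ∈ 𝔻, m (t + s) z = m t z * m s (φ t z) := by
    intro t ht s hs z hz
    calc m (t + s) z = ι (S (t + s) (e 0)) z := (hm_eval (t+s) (by positivity) z hz).symm
    _ = ι (S t (S s (e 0))) z := by rw [hS_add t ht s hs]; rfl
    _ = m t z * ι (S s (e 0)) (φ t z) := hS_rep t ht _ z hz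
    _ = m t z * m s (φ t z) := by rw [hm_eval s hs _ (hφ_maps t ht z hz)]
  set g : ℂ → ℂ := ι (Γ (e 0)) with hgdef
  have hg_diff : DifferentiableOn ℂ g 𝔻 := hι_hol _
  have hg_cont : ContinuousOn g 𝔻 := hg_diff.continuousOn
  -- Step A : pointwise derivative of m at 0
  have hA : ∀ w ∈ 𝔻, Tendsto (fun t : ℝ => (t:ℝ)⁻¹ • (m t w - 1)) (𝓝[>] (0:ℝ)) (𝓝 (g w)) := by
    intro w hw
    have h1 := hpt_tendsto w hw _ _ _ (hΓ (e 0) (he𝒟 0))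
    refine Tendsto.congr' ?_ h1
    filter_upwards [self_mem_nhdsWithin] with t (ht : 0 < t)
    rw [hι_smul, hι_sub, hm_eval t ht.le w hw, he0 w hw, Complex.real_smul,
      Complex.ofReal_inv, one_div]
  -- right continuity of m at time 0, within Ici 0
  have hm_cont0 : ∀ w ∈ 𝔻, Tendsto (fun u : ℝ => m u w) (𝓝[Ici (0:ℝ)] 0) (𝓝 1) := by
    intro w hw
    have hsplit : (𝓝[Ici (0:ℝ)] 0) = 𝓝[>] (0:ℝ) ⊔ pure 0 := by
      rw [← Ioi_union_left, nhdsWithin_union, nhdsWithin_singleton]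
    rw [hsplit, tendsto_sup]
    constructor
    · have h1 := hpt_tendsto w hw _ _ _ (hS_cont (e 0))
      rw [he0 w hw] at h1
      refine Tendsto.congr' ?_ h1
      filter_upwards [self_mem_nhdsWithin] with t (ht : 0 < t)
      exact hm_eval t ht.le w hw
    · have h2 := tendsto_pure_nhds (fun u : ℝ => m u w) 0
      rwa [hm0 w hw] at h2
  -- right derivative of m everywhere
  have hm_deriv : ∀ t ≥ (0:ℝ), ∀ z ∈ 𝔻,
      HasDerivWithinAt (fun u : ℝ => m u z) (g (φ t z) * m t z) (Ici t) t := by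
    intro t ht z hz
    have hw : φ t z ∈ 𝔻 := hφ_maps t ht z hz
    have hψ : HasDerivWithinAt (fun s : ℝ => m s (φ t z)) (g (φ t z)) (Ici (0:ℝ)) 0 := by
      rw [hasDerivWithinAt_iff_tendsto_slope, Ici_sdiff_left]
      refine Tendsto.congr' ?_ (hA _ hw)
      filter_upwards [self_mem_nhdsWithin] with u (hu : 0 < u)
      rw [slope_def_module, sub_zero, hm0 _ hw]
    have hψ' : HasDerivWithinAt (fun s : ℝ => m s (φ t z)) (g (φ t z)) (Ici (0:ℝ))
        (t - t) := by
      rw [sub_self]; exact hψ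
    have hsub : HasDerivWithinAt (fun u : ℝ => u - t) 1 (Ici t) t := by
      simpa using (hasDerivWithinAt_id t (Ici t)).sub_const t
    have hmaps : MapsTo (fun u : ℝ => u - t) (Ici t) (Ici (0:ℝ)) := fun u hu =>
      mem_Ici.2 (sub_nonneg.2 (mem_Ici.1 hu))
    have hcomp := hψ'.scomp_of_eq t hsub hmaps (by norm_num)
    have hconst := hcomp.const_mul (m t z)
    have hfinal : HasDerivWithinAt (fun u : ℝ => m u z) (m t z * ((1:ℝ) • g (φ t z))) (Ici t) t := by
      refine hconst.congr ?_ ?_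
      · intro u hu
        have h2 := hcoc t ht (u - t) (sub_nonneg.2 hu) z hz
        rw [show t + (u - t) = u by ring] at h2
        exact h2
      · show m t z = m t z * ((fun s : ℝ => m s (φ t z)) ∘ fun u : ℝ => u - t) t
        simp [Function.comp, sub_self, hm0 _ hw]
    have hval : m t z * ((1:ℝ) • g (φ t z)) = g (φ t z) * m t z := by
      rw [one_smul]; ring
    rwa [hval] at hfinal
  -- continuity of t ↦ m t z on [0,b]
  have hm_contOn : ∀ b ≥ (0:ℝ), ∀ z ∈ 𝔻, ContinuousOn (fun t : ℝ => m t z) (Icc 0 b) := by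
    intro b hb z hz t0 ht0
    obtain ⟨ht00, ht0b⟩ := ht0
    have hw0 : φ t0 z ∈ 𝔻 := hφ_maps t0 ht00 z hz
    have hR : Tendsto (fun t : ℝ => m t z) (𝓝[Ici t0] t0) (𝓝 (m t0 z)) := by
      have hst : Tendsto (fun t : ℝ => t - t0) (𝓝[Ici t0] t0) (𝓝[Ici (0:ℝ)] 0) := by
        apply tendsto_nhdsWithin_of_tendsto_nhds_of_eventually_within
        · have h1 : Tendsto (fun t : ℝ => t - t0) (𝓝 t0) (𝓝 (t0 - t0)) :=
            (continuous_id.sub continuous_const).tendsto t0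
          rw [sub_self] at h1
          exact h1.mono_left nhdsWithin_le_nhds
        · filter_upwards [self_mem_nhdsWithin] with t (ht : t0 ≤ t)
          exact sub_nonneg.2 ht
      have h1 : Tendsto (fun t : ℝ => m (t - t0) (φ t0 z)) (𝓝[Ici t0] t0) (𝓝 1) :=
        (hm_cont0 _ hw0).comp hst
      have h2 := h1.const_mul (m t0 z)
      rw [mul_one] at h2
      refine Tendsto.congr' ?_ h2
      filter_upwards [self_mem_nhdsWithin] with t (ht : t0 ≤ t)
      have h3 := hcoc t0 ht00 (t - t0) (sub_nonneg.2 ht) z hz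
      rw [show t0 + (t - t0) = t by ring] at h3
      exact h3.symm
    have hL : Tendsto (fun t : ℝ => m t z) (𝓝[Ico 0 t0] t0) (𝓝 (m t0 z)) := by
      have hKc : IsCompact ((fun t : ℝ => φ t z) '' Icc 0 t0) :=
        isCompact_Icc.image_of_continuousOn ((hφ_cont z hz).mono Icc_subset_Ici_self)
      have hKs : ((fun t : ℝ => φ t z) '' Icc 0 t0) ⊆ 𝔻 := by
        rintro _ ⟨t, ht, rfl⟩; exact hφ_maps t ht.1 z hz
      obtain ⟨CK, hCK, hKb⟩ := hι_emb _ hKs hKc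
      have hst : Tendsto (fun t : ℝ => t0 - t) (𝓝[Ico 0 t0] t0) (𝓝[>] (0:ℝ)) := by
        apply tendsto_nhdsWithin_of_tendsto_nhds_of_eventually_within
        · have h1 : Tendsto (fun t : ℝ => t0 - t) (𝓝 t0) (𝓝 (t0 - t0)) :=
            (continuous_const.sub continuous_id).tendsto t0
          rw [sub_self] at h1
          exact h1.mono_left nhdsWithin_le_nhds
        · filter_upwards [self_mem_nhdsWithin] with t (ht : t ∈ Ico 0 t0)
          exact sub_pos.2 ht.2
      have hu : Tendsto (fun t : ℝ => S (t0 - t) (e 0) - e 0) (𝓝[Ico 0 t0] t0) (𝓝 0) := by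
        have h1 := ((hS_cont (e 0)).comp hst).sub_const (e 0)
        simpa using h1
      have hμ : Tendsto (fun t : ℝ => m (t0 - t) (φ t z)) (𝓝[Ico 0 t0] t0) (𝓝 1) := by
        rw [tendsto_iff_norm_sub_tendsto_zero]
        refine squeeze_zero' (g := fun t : ℝ => CK * ‖S (t0 - t) (e 0) - e 0‖)
          (by filter_upwards with t using norm_nonneg _) ?_ ?_
        · filter_upwards [self_mem_nhdsWithin] with t (ht : t ∈ Ico 0 t0)
          have h0t : (0:ℝ) ≤ t0 - t := (sub_pos.2 ht.2).le
          have hφt : φ t z ∈ (fun t : ℝ => φ t z) '' Icc 0 t0 := ⟨t, ⟨ht.1, ht.2.le⟩, rfl⟩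
          have heq : m (t0 - t) (φ t z) - 1 = ι (S (t0 - t) (e 0) - e 0) (φ t z) := by
            rw [hι_sub, hm_eval (t0 - t) h0t _ (hKs hφt), he0 _ (hKs hφt)]
          rw [heq]
          exact hKb _ _ hφt
        · simpa using (hu.norm).const_mul CK
      have hne : ∀ᶠ t in 𝓝[Ico 0 t0] t0, m (t0 - t) (φ t z) ≠ 0 :=
        hμ.eventually_ne one_ne_zero
      have hkey : ∀ᶠ t in 𝓝[Ico 0 t0] t0, m t0 z / m (t0 - t) (φ t z) = m t z := by
        filter_upwards [self_mem_nhdsWithin, hne] with t (ht : t ∈ Ico 0 t0) hnz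
        have h0t : (0:ℝ) ≤ t0 - t := (sub_pos.2 ht.2).le
        have h3 := hcoc t ht.1 (t0 - t) h0t z hz
        rw [show t + (t0 - t) = t0 by ring] at h3
        rw [div_eq_iff hnz]
        exact h3
      have hdiv : Tendsto (fun t : ℝ => m t0 z / m (t0 - t) (φ t z)) (𝓝[Ico 0 t0] t0)
          (𝓝 (m t0 z)) := by
        have := (tendsto_const_nhds (x := m t0 z) (f := 𝓝[Ico 0 t0] t0)).div hμ one_ne_zero
        rw [div_one] at this; exact this
      exact Tendsto.congr' hkey hdiv
    have hsub2 : Icc (0:ℝ) b ⊆ Ico 0 t0 ∪ Ici t0 := by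
      intro t ht
      rcases lt_or_ge t t0 with h | h
      · exact Or.inl ⟨ht.1, h⟩
      · exact Or.inr h
    have hle : 𝓝[Icc (0:ℝ) b] t0 ≤ 𝓝[Ico 0 t0] t0 ⊔ 𝓝[Ici t0] t0 := by
      rw [← nhdsWithin_union]
      exact nhdsWithin_mono _ hsub2
    exact (tendsto_sup.2 ⟨hL, hR⟩).mono_left hle
  -- the exponential representation
  have hrep : ∀ t ≥ (0:ℝ), ∀ z ∈ 𝔻, m t z = Complex.exp (∫ s in (0:ℝ)..t, g (φ s z)) := by
    intro b hb z hz
    have hφc : Continuous fun s : ℝ => φ (max s 0) z := by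
      have h1 : Continuous fun s : ℝ => max s 0 := continuous_id.max continuous_const
      exact (hφ_cont z hz).comp_continuous h1 (fun s => mem_Ici.2 (le_max_right _ _))
    have hFc : Continuous fun s : ℝ => g (φ (max s 0) z) :=
      hg_cont.comp_continuous hφc (fun s => hφ_maps _ (le_max_right _ _) z hz)
    set F : ℝ → ℂ := fun s => g (φ (max s 0) z) with hFdef
    set I : ℝ → ℂ := fun u => ∫ s in (0:ℝ)..u, F s with hIdef
    have hI_deriv : ∀ t : ℝ, HasDerivAt I (F t) t := fun t =>
      (hFc.integral_hasStrictDerivAt 0 t).hasDerivAt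
    have hI_cont : Continuous I := by
      rw [continuous_iff_continuousAt]; exact fun t => (hI_deriv t).continuousAt
    have hh_cont : ContinuousOn (fun u : ℝ => m u z * Complex.exp (-I u)) (Icc 0 b) :=
      (hm_contOn b hb z hz).mul (Continuous.continuousOn (hI_cont.neg.cexp))
    have hh_deriv : ∀ t ∈ Ico (0:ℝ) b,
        HasDerivWithinAt (fun u : ℝ => m u z * Complex.exp (-I u)) 0 (Ici t) t := by
      intro t ht
      have hFt : F t = g (φ t z) := by
        simp only [hFdef, max_eq_left ht.1]
      have d1 := hm_deriv t ht.1 z hz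
      have d2 : HasDerivWithinAt (fun u : ℝ => Complex.exp (-I u))
          (Complex.exp (-I t) * (-F t)) (Ici t) t := ((hI_deriv t).hasDerivWithinAt.neg).cexp
      have d3 := d1.mul d2
      have hval : g (φ t z) * m t z * Complex.exp (-I t)
          + m t z * (Complex.exp (-I t) * -F t) = 0 := by
        rw [hFt]; ring
      rwa [hval] at d3
    have hconst := constant_of_has_deriv_right_zero hh_cont hh_deriv b ⟨hb, le_rfl⟩
    have h00 : m 0 z * Complex.exp (-I 0) = 1 := by
      simp [hm0 z hz, hIdef, intervalIntegral.integral_same]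
    rw [h00] at hconst
    have hmb : m b z = Complex.exp (I b) := by
      rw [Complex.exp_neg, ← div_eq_mul_inv, div_eq_one_iff_eq (Complex.exp_ne_zero _)] at hconst
      exact hconst
    have hIeq : I b = ∫ s in (0:ℝ)..b, g (φ s z) := by
      apply intervalIntegral.integral_congr
      intro s hs
      rw [uIcc_of_le hb] at hs
      simp only [hFdef, max_eq_left hs.1]
    rw [hmb, hIeq]
  refine ⟨g, hg_diff, hrep, ?_⟩
  rintro ⟨Bg, hBg⟩
  have h0𝔻 : (0:ℂ) ∈ 𝔻 := by simp [h𝔻def]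
  have hBg0 : 0 ≤ Bg := le_trans (norm_nonneg _) (hBg 0 h0𝔻)
  -- injectivity on the ball via condition (c)
  have hinj : ∀ u : X, (∀ z ∈ 𝔻, ι u z = 0) → u = 0 := by
    intro u hu
    have h1 := hCn 1 le_rfl u 0 (by
      intro z hz
      rw [map_zero]
      simp [hu z hz])
    have h2 := hCn_pos 1 le_rfl
    rw [norm_zero] at h1
    have h3 : ‖u‖ ≤ 0 := by nlinarith [norm_nonneg u]
    exact norm_le_zero_iff.1 h3
  -- generator formula on monomials
  have hgen : ∀ n : ℕ, ∀ z ∈ 𝔻, ι (Γ (e n)) z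
      = g z * z ^ n + (n:ℂ) * z ^ (n - 1) * G z := by
    intro n z hz
    have hpow : ∀ k : ℕ, HasDerivWithinAt (fun t : ℝ => (φ t z) ^ k)
          ((k:ℂ) * (φ 0 z) ^ (k - 1) * G (φ 0 z)) (Ici (0:ℝ)) 0 := by
      intro k
      induction k with
        | zero => simpa using hasDerivWithinAt_const (0:ℝ) (Ici (0:ℝ)) (1:ℂ)
        | succ j ih =>
          have h2 := ih.mul (hφ_ode z hz 0 le_rfl)
          have hfn : (fun t : ℝ => (φ t z) ^ (j + 1))
              = fun t : ℝ => (φ t z) ^ j * (φ t z) := by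
            funext u; rw [pow_succ]
          rw [hfn]
          have hval2 : ((j:ℂ) * (φ 0 z) ^ (j - 1) * G (φ 0 z)) * (φ 0 z)
              + (φ 0 z) ^ j * G (φ 0 z)
              = ((j+1 : ℕ):ℂ) * (φ 0 z) ^ (j + 1 - 1) * G (φ 0 z) := by
            rcases Nat.eq_zero_or_pos j with hj | hj
            · subst hj
              push_cast
              ring
            · have hcc : (φ 0 z) ^ (j - 1) * (φ 0 z) = (φ 0 z) ^ j := by
                rw [← pow_succ, Nat.sub_add_cancel hj]
              have h3 : (j:ℂ) * (φ 0 z) ^ (j - 1) * G (φ 0 z) * (φ 0 z)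
                  + (φ 0 z) ^ j * G (φ 0 z)
                  = ((j:ℂ) + 1) * (φ 0 z) ^ j * G (φ 0 z) := by
                rw [← hcc]; ring
              rw [h3, Nat.add_sub_cancel]
              push_cast
              ring
          rwa [hval2] at h2
    have hlim1 := hpt_tendsto z hz _ _ _ (hΓ (e n) (he𝒟 n))
    have hD : HasDerivWithinAt (fun t : ℝ => m t z * (φ t z) ^ n)
        (g z * z ^ n + (n:ℂ) * z ^ (n - 1) * G z) (Ici (0:ℝ)) 0 := by
      have d1 := hm_deriv 0 le_rfl z hz
      have d2 := hpow n
      have d3 := d1.mul d2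
      have hval : g (φ 0 z) * m 0 z * φ 0 z ^ n
          + m 0 z * ((n:ℂ) * φ 0 z ^ (n - 1) * G (φ 0 z))
          = g z * z ^ n + (n:ℂ) * z ^ (n - 1) * G z := by
        rw [hφ_zero z hz, hm0 z hz]; ring
      rwa [hval] at d3
    rw [hasDerivWithinAt_iff_tendsto_slope, Ici_sdiff_left] at hD
    have heq : (fun t : ℝ => ι ((1 / (t:ℂ)) • (S t (e n) - e n)) z) =ᶠ[𝓝[>] (0:ℝ)]
        slope (fun t : ℝ => m t z * (φ t z) ^ n) 0 := by
      filter_upwards [self_mem_nhdsWithin] with t (ht : 0 < t)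
      rw [hι_smul, hι_sub, hS_rep t ht.le _ z hz, he n _ (hφ_maps t ht.le z hz), he n z hz]
      rw [slope_def_module, sub_zero, hφ_zero z hz, hm0 z hz, one_mul,
        Complex.real_smul, Complex.ofReal_inv, one_div]
    exact tendsto_nhds_unique hlim1 (Tendsto.congr' heq.symm hD)
  constructor
  · -- bounded generator implies G = 0
    rintro ⟨C', hC'pos, hC'⟩ z hz
    have hq : ∀ n : ℕ, ∃ q : X, (∀ w ∈ 𝔻, ι q w = g w * w ^ n) ∧ ‖q‖ ≤ C * Bg * ‖e n‖ := by
      intro n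
      obtain ⟨q, hq1, hq2⟩ := hmulC g hg_diff Bg hBg (e n)
      exact ⟨q, fun w hw => by rw [hq1 w hw, he n w hw], hq2⟩
    obtain ⟨q1, hq1, hq1n⟩ := hq 1
    set fG : X := Γ (e 1) - q1 with hfGdef
    have hfGval : ∀ w ∈ 𝔻, ι fG w = G w := by
      intro w hw
      rw [hfGdef, hι_sub, hgen 1 w hw, hq1 w hw]
      simp
    set K : ℝ := C * (C' + C * Bg) with hKdef
    have hbound : ∀ n : ℕ, 1 ≤ n → ‖fG‖ ≤ K * (‖e n‖ / (n * Cn n)) := by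
      intro n hn
      obtain ⟨q, hqv, hqn⟩ := hq n
      have hrval : ∀ w ∈ 𝔻, ι (Γ (e n) - q) w = (n:ℂ) * w ^ (n - 1) * G w := by
        intro w hw
        rw [hι_sub, hgen n w hw, hqv w hw]
        ring
      obtain ⟨p, hpv, hpn⟩ := hmulC (fun w => w) differentiableOn_id 1
        (fun w hw => (mem_ball_zero_iff.1 hw).le) (Γ (e n) - q)
      have hpval : ∀ w ∈ 𝔻, ι p w = w ^ n * ι ((n:ℂ) • fG) w := by
        intro w hw
        rw [hpv w hw, hrval w hw, hι_smul, hfGval w hw]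
        have hw2 : w ^ (n - 1) * w = w ^ n := by
          rw [← pow_succ, Nat.sub_add_cancel hn]
        rw [← hw2]; ring
      have hle := hCn n hn ((n:ℂ) • fG) p hpval
      have hns : ‖(n:ℂ) • fG‖ = (n:ℝ) * ‖fG‖ := by
        rw [norm_smul]; simp
      rw [hns] at hle
      have hrb : ‖Γ (e n) - q‖ ≤ (C' + C * Bg) * ‖e n‖ := by
        calc ‖Γ (e n) - q‖ ≤ ‖Γ (e n)‖ + ‖q‖ := norm_sub_le _ _
        _ ≤ C' * ‖e n‖ + C * Bg * ‖e n‖ := add_le_add (hC' _ (he𝒟 n)) hqn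
        _ = (C' + C * Bg) * ‖e n‖ := by ring
      have hpb : ‖p‖ ≤ K * ‖e n‖ := by
        calc ‖p‖ ≤ C * 1 * ‖Γ (e n) - q‖ := hpn
        _ ≤ C * 1 * ((C' + C * Bg) * ‖e n‖) := by
            exact mul_le_mul_of_nonneg_left hrb (by positivity)
        _ = K * ‖e n‖ := by rw [hKdef]; ring
      have hn0 : (0:ℝ) < (n:ℝ) := by exact_mod_cast hn
      have hCnn := hCn_pos n hn
      have hmain : Cn n * ((n:ℝ) * ‖fG‖) ≤ K * ‖e n‖ := hle.trans hpb
      calc ‖fG‖ = (Cn n * ((n:ℝ) * ‖fG‖)) / ((n:ℝ) * Cn n) := by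
            field_simp
      _ ≤ (K * ‖e n‖) / ((n:ℝ) * Cn n) := by
            apply div_le_div_of_nonneg_right hmain (by positivity)
      _ = K * (‖e n‖ / ((n:ℝ) * Cn n)) := by ring
    have hK0 : Tendsto (fun n : ℕ => K * (‖e n‖ / (n * Cn n))) atTop (𝓝 0) := by
      simpa using hd.const_mul K
    have hfG0 : ‖fG‖ ≤ 0 := ge_of_tendsto hK0 (by
      filter_upwards [eventually_ge_atTop 1] with n hn using hbound n hn)
    have hfGz : fG = 0 := norm_le_zero_iff.1 hfG0
    have h2 := hfGval z hz
    rw [hfGz, map_zero] at h2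
    exact h2.symm
  · -- G = 0 implies bounded generator
    intro hG0
    refine ⟨C * Bg + 1, by positivity, ?_⟩
    intro f hf
    have hφ_id : ∀ t ≥ (0:ℝ), ∀ z ∈ 𝔻, φ t z = z := by
      intro t ht z hz
      have hcont : ContinuousOn (fun s : ℝ => φ s z) (Icc 0 t) :=
        (hφ_cont z hz).mono Icc_subset_Ici_self
      have hder : ∀ x ∈ Ico (0:ℝ) t, HasDerivWithinAt (fun s : ℝ => φ s z) 0 (Ici x) x := by
        intro x hx
        have h1 := hφ_ode z hz x hx.1
        rw [hG0 _ (hφ_maps x hx.1 z hz)] at h1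
        exact h1.mono (Ici_subset_Ici.2 hx.1)
      have h2 := constant_of_has_deriv_right_zero hcont hder t ⟨ht, le_rfl⟩
      rw [h2, hφ_zero z hz]
    have hm_exp : ∀ t ≥ (0:ℝ), ∀ z ∈ 𝔻, m t z = Complex.exp ((t:ℂ) * g z) := by
      intro t ht z hz
      rw [hrep t ht z hz]
      congr 1
      have hcg : ∀ s ∈ uIcc (0:ℝ) t, g (φ s z) = g z := by
        intro s hs
        rw [uIcc_of_le ht] at hs
        rw [hφ_id s hs.1 z hz]
      rw [intervalIntegral.integral_congr hcg, intervalIntegral.integral_const,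
        Complex.real_smul, sub_zero]
    obtain ⟨p, hpv, hpn⟩ := hmulC g hg_diff Bg hBg f
    have hΓf : Γ f = p := by
      have hdiff0 : ∀ z ∈ 𝔻, ι (Γ f - p) z = 0 := by
        intro z hz
        rw [hι_sub, hpv z hz]
        have hlim1 := hpt_tendsto z hz _ _ _ (hΓ f hf)
        have hder : HasDerivAt (fun t : ℝ => Complex.exp ((t:ℂ) * g z)) (g z) 0 := by
          have h1 : HasDerivAt (fun t : ℝ => ((t:ℝ):ℂ)) 1 (0:ℝ) := by
            simpa using (hasDerivAt_id (0:ℝ)).ofReal_comp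
          have h2 := (h1.mul_const (g z)).cexp
          simpa using h2
        rw [hasDerivAt_iff_tendsto_slope] at hder
        have hder' : Tendsto (slope (fun t : ℝ => Complex.exp ((t:ℂ) * g z)) 0)
            (𝓝[>] (0:ℝ)) (𝓝 (g z)) :=
          hder.mono_left (nhdsWithin_mono _ (fun x (hx : 0 < x) =>
            mem_compl_singleton_iff.2 (ne_of_gt hx)))
        have hlim2 := hder'.mul_const (ι f z)
        have heq2 : (fun t : ℝ => ι ((1 / (t:ℂ)) • (S t f - f)) z) =ᶠ[𝓝[>] (0:ℝ)]
            (fun t : ℝ => slope (fun t : ℝ => Complex.exp ((t:ℂ) * g z)) 0 t * ι f z) := by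
          filter_upwards [self_mem_nhdsWithin] with t (ht : 0 < t)
          rw [hι_smul, hι_sub, hS_rep t ht.le f z hz, hφ_id t ht.le z hz,
            hm_exp t ht.le z hz, slope_def_module, sub_zero, Complex.real_smul,
            Complex.ofReal_inv, one_div]
          simp only [Complex.ofReal_zero, zero_mul, Complex.exp_zero]
          ring
        have h3 := tendsto_nhds_unique hlim1 (Tendsto.congr' heq2.symm hlim2)
        rw [h3]
        ring
      exact sub_eq_zero.1 (hinj _ hdiff0)
    rw [hΓf]
    calc ‖p‖ ≤ C * Bg * ‖f‖ := hpn
    _ ≤ (C * Bg + 1) * ‖f‖ := by nlinarith [norm_nonneg f]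
end

section
/- Let α ≥ 0 be a real number, set w_0 = 0 and w_n = n·n!/((α+1)(α+2)⋯(α+n)) for n ≥ 1, and for a sequence a = (a_n)_{n≥0} of complex numbers define N(a)² = Σ_{n≥0} w_n|a_n|² (the square of the D_α-norm of f = Σ a_n zⁿ). Then for every integer k ≥ 1 there exists a constant C_k > 0 such that for every sequence a with N(a) < ∞ one has Σ_{n≥0} w_{n+k}|a_n|² < ∞ (i.e. e_k f ∈ D_α, where e_k f has coefficient sequence shifted by k) and C_k² N(a)² ≤ Σ_{n≥0} w_{n+k}|a_n|²; moreover the constants C_k can be chosen so that lim_{k→∞} √(w_k)/(k C_k) = 0 (equivalently ‖e_k‖_{D_α}/(k C_k) → 0, since ‖e_k‖²_{D_α} = w_k). -/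
open Set Filter Topology

private lemma prod_pos_aux (α : ℝ) (hα : 0 ≤ α) (n : ℕ) :
    0 < ∏ j ∈ Finset.range n, (α + j + 1) := by
  apply Finset.prod_pos; intro j _; positivity

private lemma fact_prod (n k : ℕ) :
    ((n + k).factorial : ℝ) = n.factorial * ∏ j ∈ Finset.range k, ((n : ℝ) + j + 1) := by
  induction k with
  | zero => simp
  | succ k ih =>
      rw [Finset.prod_range_succ, ← mul_assoc, ← ih,
        show n + (k+1) = (n+k)+1 from rfl, Nat.factorial_succ]
      push_cast
      ring

private lemma kfact_prod (k : ℕ) :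
    (k.factorial : ℝ) = ∏ j ∈ Finset.range k, ((j : ℝ) + 1) := by
  simpa using fact_prod 0 k

private lemma key_prod (α : ℝ) (hα : 0 ≤ α) (k n : ℕ) :
    (∏ j ∈ Finset.range k, ((j : ℝ) + 1)) *
      (∏ j ∈ Finset.range k, (α + ((n + j : ℕ) : ℝ) + 1)) ≤
    (∏ j ∈ Finset.range k, ((n : ℝ) + j + 1)) *
      (∏ j ∈ Finset.range k, (α + j + 1)) := by
  rw [← Finset.prod_mul_distrib, ← Finset.prod_mul_distrib]
  apply Finset.prod_le_prod
  · intro j _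
    have hn : (0:ℝ) ≤ n := Nat.cast_nonneg n
    have hj : (0:ℝ) ≤ j := Nat.cast_nonneg j
    push_cast
    positivity
  · intro j _
    have hn : (0:ℝ) ≤ n := Nat.cast_nonneg n
    have hj : (0:ℝ) ≤ j := Nat.cast_nonneg j
    push_cast
    nlinarith

private lemma Psplit (α : ℝ) (n k : ℕ) :
    ∏ j ∈ Finset.range (n + k), (α + j + 1) =
      (∏ j ∈ Finset.range n, (α + j + 1)) *
        ∏ j ∈ Finset.range k, (α + ((n + j : ℕ) : ℝ) + 1) :=
  Finset.prod_range_add (fun j => α + j + 1) n k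

private lemma lowerA (α : ℝ) (hα : 0 ≤ α) (k n : ℕ) (hk : 1 ≤ k) (hn : 1 ≤ n) :
    ((k : ℝ) * k.factorial / (∏ j ∈ Finset.range k, (α + j + 1)) / k) *
      ((n : ℝ) * n.factorial / ∏ j ∈ Finset.range n, (α + j + 1)) ≤
    ((n + k : ℕ) : ℝ) * (n + k).factorial / ∏ j ∈ Finset.range (n + k), (α + j + 1) := by
  have hPk := prod_pos_aux α hα k
  have hPn := prod_pos_aux α hα n
  have hPnk := prod_pos_aux α hα (n + k)
  have hk0 : (0:ℝ) < k := by exact_mod_cast hk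
  have hn0 : (0:ℝ) < n := by exact_mod_cast hn
  have hfk : (0:ℝ) < k.factorial := by exact_mod_cast k.factorial_pos
  have hfn : (0:ℝ) < n.factorial := by exact_mod_cast n.factorial_pos
  have hL : ((k : ℝ) * k.factorial / (∏ j ∈ Finset.range k, (α + j + 1)) / k) *
      ((n : ℝ) * n.factorial / ∏ j ∈ Finset.range n, (α + j + 1)) =
      ((k.factorial : ℝ) * ((n : ℝ) * n.factorial)) /
        ((∏ j ∈ Finset.range k, (α + j + 1)) * ∏ j ∈ Finset.range n, (α + j + 1)) := by
    have h1 : ((k : ℝ) * k.factorial / (∏ j ∈ Finset.range k, (α + j + 1)) / k) =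
        (k.factorial : ℝ) / ∏ j ∈ Finset.range k, (α + j + 1) := by
      rw [div_div, div_eq_div_iff (by positivity) hPk.ne']
      ring
    rw [h1, div_mul_div_comm]
  rw [hL, div_le_div_iff₀ (by positivity) hPnk, Psplit α n k, fact_prod n k, kfact_prod k]
  have hkey := key_prod α hα k n
  have hcast : ((n + k : ℕ) : ℝ) = (n : ℝ) + k := by push_cast; ring
  rw [hcast]
  set A := ∏ j ∈ Finset.range k, ((j : ℝ) + 1) with hA
  set Q := ∏ j ∈ Finset.range k, (α + ((n + j : ℕ) : ℝ) + 1) with hQ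
  set R := ∏ j ∈ Finset.range k, ((n : ℝ) + j + 1) with hR
  set Pk := ∏ j ∈ Finset.range k, (α + j + 1) with hPk'
  set Pn := ∏ j ∈ Finset.range n, (α + j + 1) with hPn'
  have hQ0 : 0 < Q := by apply Finset.prod_pos; intro j _; positivity
  have hR0 : 0 < R := by
    apply Finset.prod_pos; intro j _
    have : (0:ℝ) ≤ j := Nat.cast_nonneg j
    positivity
  calc A * ((n : ℝ) * n.factorial) * (Pn * Q)
      = (A * Q) * ((n : ℝ) * n.factorial * Pn) := by ring
    _ ≤ (R * Pk) * ((n : ℝ) * n.factorial * Pn) := by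
        apply mul_le_mul_of_nonneg_right hkey; positivity
    _ ≤ (R * Pk) * (((n : ℝ) + k) * n.factorial * Pn) := by
        apply mul_le_mul_of_nonneg_left _ (by positivity)
        have h2 : (n : ℝ) ≤ (n : ℝ) + k := by linarith
        exact mul_le_mul_of_nonneg_right (mul_le_mul_of_nonneg_right h2 hfn.le) hPn.le
    _ = ((n : ℝ) + k) * ((n.factorial : ℝ) * R) * (Pk * Pn) := by ring

private lemma upperB (α : ℝ) (hα : 0 ≤ α) (k n : ℕ) (hn : 1 ≤ n) :
    ((n + k : ℕ) : ℝ) * (n + k).factorial / ∏ j ∈ Finset.range (n + k), (α + j + 1) ≤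
    ((k : ℝ) + 1) * ((n : ℝ) * n.factorial / ∏ j ∈ Finset.range n, (α + j + 1)) := by
  have hPn := prod_pos_aux α hα n
  have hPnk := prod_pos_aux α hα (n + k)
  have hn0 : (0:ℝ) < n := by exact_mod_cast hn
  have hfn : (0:ℝ) < n.factorial := by exact_mod_cast n.factorial_pos
  have hk0 : (0:ℝ) ≤ k := Nat.cast_nonneg k
  rw [mul_div_assoc' ((k:ℝ)+1), div_le_div_iff₀ hPnk hPn, Psplit α n k, fact_prod n k]
  have hcast : ((n + k : ℕ) : ℝ) = (n : ℝ) + k := by push_cast; ring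
  rw [hcast]
  set Q := ∏ j ∈ Finset.range k, (α + ((n + j : ℕ) : ℝ) + 1) with hQ
  set R := ∏ j ∈ Finset.range k, ((n : ℝ) + j + 1) with hR
  set Pn := ∏ j ∈ Finset.range n, (α + j + 1) with hPn'
  have hRQ : R ≤ Q := by
    apply Finset.prod_le_prod
    · intro j _
      have : (0:ℝ) ≤ j := Nat.cast_nonneg j
      positivity
    · intro j _
      push_cast
      linarith
  have hR0 : 0 < R := by
    apply Finset.prod_pos; intro j _
    have : (0:ℝ) ≤ j := Nat.cast_nonneg j
    positivity
  have hn1 : (1:ℝ) ≤ (n:ℝ) := by exact_mod_cast hn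
  have hnk : (n:ℝ) + k ≤ ((k:ℝ)+1) * n := by
    nlinarith [mul_nonneg hk0 (by linarith : (0:ℝ) ≤ (n:ℝ) - 1)]
  calc ((n : ℝ) + k) * ((n.factorial : ℝ) * R) * Pn
      ≤ (((k:ℝ)+1) * n) * ((n.factorial : ℝ) * Q) * Pn := by
        exact mul_le_mul_of_nonneg_right (mul_le_mul hnk
          (mul_le_mul_of_nonneg_left hRQ hfn.le) (by positivity) (by positivity)) hPn.le
    _ = ((k:ℝ)+1) * ((n:ℝ) * n.factorial) * (Pn * Q) := by ring

/-- For `α ≥ 0`, `w_0 = 0`, `w_n = n·n!/((α+1)⋯(α+n))` (n ≥ 1) and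
`N(a)² = Σ_{n≥0} w_n|a_n|²`, for every `k ≥ 1` there is `C_k > 0` such that whenever
`N(a) < ∞`, the shifted series `Σ_n w_{n+k}|a_n|²` is finite (i.e. `e_k f ∈ D_α`) and
`C_k² N(a)² ≤ Σ_n w_{n+k}|a_n|²`; moreover the `C_k` can be chosen so that
`√(w_k)/(k C_k) → 0`, i.e. `‖e_k‖_{D_α}/(k C_k) → 0`. -/
theorem dirichlet_shift_lower_bound
    (α : ℝ) (hα : 0 ≤ α)
    (w : ℕ → ℝ) (hw0 : w 0 = 0)
    (hw : ∀ n : ℕ, 1 ≤ n →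
      w n = n * n.factorial / ∏ j ∈ Finset.range n, (α + j + 1)) :
    ∃ C : ℕ → ℝ,
      (∀ k : ℕ, 1 ≤ k → 0 < C k) ∧
      (∀ k : ℕ, 1 ≤ k → ∀ a : ℕ → ℂ,
        Summable (fun n : ℕ => w n * ‖a n‖ ^ 2) →
          Summable (fun n : ℕ => w (n + k) * ‖a n‖ ^ 2) ∧
          (C k) ^ 2 * (∑' n : ℕ, w n * ‖a n‖ ^ 2) ≤
            ∑' n : ℕ, w (n + k) * ‖a n‖ ^ 2) ∧
      Tendsto (fun k : ℕ => Real.sqrt (w k) / (k * C k)) atTop (𝓝 0) := by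
  have hwpos : ∀ n : ℕ, 1 ≤ n → 0 < w n := by
    intro n hn
    rw [hw n hn]
    have h1 := prod_pos_aux α hα n
    have h2 : (0:ℝ) < n := by exact_mod_cast hn
    have h3 : (0:ℝ) < n.factorial := by exact_mod_cast n.factorial_pos
    positivity
  have hwnn : ∀ n : ℕ, 0 ≤ w n := by
    intro n
    cases n with
    | zero => rw [hw0]
    | succ m => exact (hwpos _ (Nat.succ_le_succ (Nat.zero_le m))).le
  -- pointwise lower bound
  have hA : ∀ k : ℕ, 1 ≤ k → ∀ n : ℕ, (w k / k) * w n ≤ w (n + k) := by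
    intro k hk n
    cases n with
    | zero =>
        rw [hw0, mul_zero, Nat.zero_add]
        exact hwnn k
    | succ m =>
        have hn : 1 ≤ m + 1 := Nat.succ_le_succ (Nat.zero_le m)
        rw [hw k hk, hw (m+1) hn, hw ((m+1)+k) (le_trans hn (Nat.le_add_right _ k))]
        exact lowerA α hα k (m+1) hk hn
  -- pointwise upper bound (for summability)
  have hB : ∀ k n : ℕ, 1 ≤ n → w (n + k) ≤ ((k : ℝ) + 1) * w n := by
    intro k n hn
    rw [hw n hn, hw (n+k) (le_trans hn (Nat.le_add_right _ k))]
    exact upperB α hα k n hn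
  refine ⟨fun k => Real.sqrt (w k / k), ?_, ?_, ?_⟩
  · intro k hk
    have h1 := hwpos k hk
    have h2 : (0:ℝ) < k := by exact_mod_cast hk
    exact Real.sqrt_pos.2 (by positivity)
  · intro k hk a hsum
    have hCk : Real.sqrt (w k / k) ^ 2 = w k / k := by
      have h1 := hwpos k hk
      have h2 : (0:ℝ) < k := by exact_mod_cast hk
      exact Real.sq_sqrt (by positivity)
    have hsum' : Summable (fun n : ℕ => w (n + k) * ‖a n‖ ^ 2) := by
      rw [← summable_nat_add_iff 1]
      apply Summable.of_nonneg_of_le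
      · intro n
        have := hwnn (n + 1 + k)
        positivity
      · intro n
        exact mul_le_mul_of_nonneg_right (hB k (n+1) (Nat.succ_le_succ (Nat.zero_le n)))
          (by positivity)
      · exact (((summable_nat_add_iff 1).2 hsum).mul_left ((k : ℝ) + 1)).congr
          (fun n => by ring)
    refine ⟨hsum', ?_⟩
    rw [hCk, ← tsum_mul_left]
    apply Summable.tsum_le_tsum _ (hsum.mul_left _) hsum'
    intro n
    calc w k / ↑k * (w n * ‖a n‖ ^ 2)
        = (w k / ↑k * w n) * ‖a n‖ ^ 2 := by ring
      _ ≤ w (n + k) * ‖a n‖ ^ 2 :=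
          mul_le_mul_of_nonneg_right (hA k hk n) (by positivity)
  · have heq : ∀ᶠ k : ℕ in atTop,
        Real.sqrt (w k) / (k * Real.sqrt (w k / k)) = (Real.sqrt k)⁻¹ := by
      filter_upwards [eventually_ge_atTop 1] with k hk
      have hwk := hwpos k hk
      have hk0 : (0:ℝ) < k := by exact_mod_cast hk
      have hsk : (0:ℝ) < Real.sqrt k := Real.sqrt_pos.2 hk0
      have hswk : (0:ℝ) < Real.sqrt (w k) := Real.sqrt_pos.2 hwk
      rw [Real.sqrt_div hwk.le]
      have h1 : (k:ℝ) * (Real.sqrt (w k) / Real.sqrt k) = Real.sqrt k * Real.sqrt (w k) := by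
        have h2 : (k:ℝ) = Real.sqrt k * Real.sqrt k := (Real.mul_self_sqrt hk0.le).symm
        field_simp
        linear_combination h2
      rw [h1]
      field_simp
    have hsq : Tendsto Real.sqrt atTop atTop := by
      have := tendsto_rpow_atTop (y := (1/2 : ℝ)) (by norm_num)
      exact this.congr (fun x => (Real.sqrt_eq_rpow x).symm)
    have h2 : Tendsto (fun k : ℕ => Real.sqrt k) atTop atTop :=
      hsq.comp tendsto_natCast_atTop_atTop
    exact Tendsto.congr' (Filter.EventuallyEq.symm heq) h2.inv_tendsto_atTop
end

section
/- Let Ω be a non-empty open simply connected subset of ℂ, X a complex Banach space embedding continuously in Hol(Ω), g ∈ Hol(Ω), and G ∈ Hol(Ω). For z ∈ Ω let φ(·,z) : [0, τ(z)) → Ω denote the unique maximal solution of u′(t) = G(u(t)), u(0) = z. Let (S_t)_{t≥0} be a strongly continuous semigroup on X whose infinitesimal generator (Γ, D(Γ)) satisfies Γf = g f + G f′ for all f ∈ D(Γ). Then for every f ∈ X, every z ∈ Ω and every t with 0 ≤ t < τ(z), (S_t f)(z) = m_t(z)·f(φ(t,z)), where m_t(z) = exp(∫₀ᵗ g(φ(s,z))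 ds). -/
open Set Filter Topology ENNReal

open MeasureTheory

section Aux

variable {X : Type*} [NormedAddCommGroup X] [NormedSpace ℂ X] [CompleteSpace X]

lemma aux_bound (S : ℝ → X →L[ℂ] X)
    (hS_zero : S 0 = ContinuousLinearMap.id ℂ X)
    (hS_add : ∀ t ≥ (0:ℝ), ∀ s ≥ (0:ℝ), S (t + s) = (S t).comp (S s))
    (hS_cont : ∀ f : X, Tendsto (fun t : ℝ => S t f) (𝓝[>] 0) (𝓝 f)) (b : ℝ) :
    ∃ M : ℝ, 1 ≤ M ∧ ∀ s, 0 ≤ s → s ≤ b → ‖S s‖ ≤ M := by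
  have L1a : ∃ δ > (0:ℝ), ∃ C : ℝ, ∀ s ∈ Ioc (0:ℝ) δ, ‖S s‖ ≤ C := by
    by_contra hcon
    push_neg at hcon
    have hsel : ∀ n : ℕ, ∃ s ∈ Ioc (0:ℝ) (1/(n+1)), (n:ℝ) < ‖S s‖ := by
      intro n
      obtain ⟨s, hs1, hs2⟩ := hcon (1/(n+1)) (by positivity) n
      exact ⟨s, hs1, hs2⟩
    choose s hs hn using hsel
    have hs0 : Tendsto s atTop (𝓝[>] (0:ℝ)) := by
      apply tendsto_nhdsWithin_of_tendsto_nhds_of_eventually_within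
      · have h1 : Tendsto (fun n : ℕ => 1/((n:ℝ)+1)) atTop (𝓝 0) :=
          tendsto_one_div_add_atTop_nhds_zero_nat
        exact squeeze_zero (fun n => (hs n).1.le) (fun n => (hs n).2) h1
      · exact Eventually.of_forall fun n => (hs n).1
    have hpt : ∀ x : X, ∃ C, ∀ n : ℕ, ‖S (s n) x‖ ≤ C := by
      intro x
      have h2 : Tendsto (fun n => ‖S (s n) x‖) atTop (𝓝 ‖x‖) := ((hS_cont x).comp hs0).norm
      obtain ⟨C, hC⟩ := h2.bddAbove_range
      exact ⟨C, fun n => hC (mem_range_self n)⟩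
    obtain ⟨C', hC'⟩ := banach_steinhaus hpt
    obtain ⟨n, hn'⟩ := exists_nat_gt C'
    exact absurd (hC' n) (not_le.mpr (hn'.trans (hn n)))
  obtain ⟨δ, hδ, C, hC⟩ := L1a
  set M₀ := max C 1 with hM₀
  have hM₀1 : (1:ℝ) ≤ M₀ := le_max_right _ _
  have key : ∀ k : ℕ, ∀ s, 0 ≤ s → s ≤ (k+1)*δ → ‖S s‖ ≤ M₀^(k+1) := by
    intro k
    induction k with
    | zero =>
      intro s hs0 hsδ
      rcases eq_or_lt_of_le hs0 with h | h
      · rw [← h, hS_zero, pow_one]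
        exact le_trans ContinuousLinearMap.norm_id_le hM₀1
      · have h1 : s ≤ δ := by push_cast at hsδ; linarith
        rw [pow_one]
        exact le_trans (hC s ⟨h, h1⟩) (le_max_left _ _)
    | succ k ih =>
      intro s hs0 hsδ
      by_cases hcase : s ≤ (k+1)*δ
      · refine le_trans (ih s hs0 hcase) (pow_le_pow_right₀ hM₀1 ?_)
        omega
      · push_neg at hcase
        have hδs : δ ≤ s := by
          refine le_trans ?_ hcase.le
          nlinarith [hδ.le]
        have h1 : S s = (S (s - δ)).comp (S δ) := by
          have h2 := hS_add (s - δ) (by linarith) δ hδ.le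
          rwa [sub_add_cancel] at h2
        have h3 : ‖S (s - δ)‖ ≤ M₀^(k+1) := by
          refine ih (s - δ) (by linarith) ?_
          push_cast at hsδ ⊢
          linarith
        calc ‖S s‖ ≤ ‖S (s-δ)‖ * ‖S δ‖ := by
              rw [h1]; exact ContinuousLinearMap.opNorm_comp_le _ _
        _ ≤ M₀^(k+1) * M₀ := by
              apply mul_le_mul h3 (le_trans (hC δ ⟨hδ, le_refl δ⟩) (le_max_left _ _))
                (norm_nonneg _) (by positivity)
        _ = M₀^(k+2) := (pow_succ _ _).symm
  obtain ⟨k, hk⟩ := exists_nat_ge (b/δ)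
  refine ⟨M₀^(k+1), ?_, fun s hs0 hsb => key k s hs0 (le_trans hsb ?_)⟩
  · calc (1:ℝ) = 1^(k+1) := (one_pow _).symm
    _ ≤ M₀^(k+1) := pow_le_pow_left₀ zero_le_one hM₀1 _
  · have : b ≤ k * δ := by
      rw [div_le_iff₀ hδ] at hk
      exact hk
    nlinarith [hδ.le]

lemma aux_cont (S : ℝ → X →L[ℂ] X)
    (hS_zero : S 0 = ContinuousLinearMap.id ℂ X)
    (hS_add : ∀ t ≥ (0:ℝ), ∀ s ≥ (0:ℝ), S (t + s) = (S t).comp (S s))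
    (hS_cont : ∀ f : X, Tendsto (fun t : ℝ => S t f) (𝓝[>] 0) (𝓝 f))
    (x : X) {t₀ : ℝ} (ht₀ : 0 ≤ t₀) :
    ContinuousWithinAt (fun s => S s x) (Ici 0) t₀ := by
  obtain ⟨M, hM1, hM⟩ := aux_bound S hS_zero hS_add hS_cont (t₀ + 1)
  have hM0 : (0:ℝ) < M := lt_of_lt_of_le one_pos hM1
  rw [Metric.continuousWithinAt_iff]
  intro ε hε
  obtain ⟨δ₁, hδ₁, hq⟩ := Metric.tendsto_nhdsWithin_nhds.mp (hS_cont x) (ε/(2*M)) (by positivity)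
  refine ⟨min δ₁ 1, by positivity, ?_⟩
  intro s hs hdist
  rw [Real.dist_eq] at hdist
  have habs : |s - t₀| < δ₁ := lt_of_lt_of_le hdist (min_le_left _ _)
  have habs1 : |s - t₀| < 1 := lt_of_lt_of_le hdist (min_le_right _ _)
  have hs0 : (0:ℝ) ≤ s := hs
  rcases le_or_gt t₀ s with hle | hlt
  · rcases eq_or_lt_of_le hle with heq | hlt'
    · rw [← heq]; simpa using hε
    · have h1 : s - t₀ ∈ Ioi (0:ℝ) := mem_Ioi.mpr (by linarith)
      have h2 : dist (s - t₀) 0 < δ₁ := by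
        rw [Real.dist_eq, sub_zero]
        rwa [abs_of_pos (by linarith : (0:ℝ) < s - t₀)] at habs ⊢
      have h3 := hq h1 h2
      rw [dist_eq_norm] at h3 ⊢
      have h4 : S s x = S t₀ (S (s - t₀) x) := by
        have h5 := hS_add t₀ ht₀ (s - t₀) (by linarith)
        rw [add_sub_cancel] at h5
        rw [h5]; rfl
      calc ‖S s x - S t₀ x‖ = ‖S t₀ (S (s - t₀) x - x)‖ := by rw [h4, map_sub]
      _ ≤ M * ‖S (s - t₀) x - x‖ :=
          ContinuousLinearMap.le_of_opNorm_le _ (hM t₀ ht₀ (by linarith)) _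
      _ ≤ M * (ε/(2*M)) := mul_le_mul_of_nonneg_left h3.le hM0.le
      _ = ε/2 := by field_simp
      _ < ε := by linarith
  · have h1 : t₀ - s ∈ Ioi (0:ℝ) := mem_Ioi.mpr (by linarith)
    have h2 : dist (t₀ - s) 0 < δ₁ := by
      rw [Real.dist_eq, sub_zero, abs_of_pos (by linarith : (0:ℝ) < t₀ - s)]
      rw [abs_sub_comm] at habs
      rwa [abs_of_pos (by linarith : (0:ℝ) < t₀ - s)] at habs
    have h3 := hq h1 h2
    rw [dist_eq_norm] at h3 ⊢
    have h4 : S t₀ x = S s (S (t₀ - s) x) := by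
      have h5 := hS_add s hs0 (t₀ - s) (by linarith)
      rw [add_sub_cancel] at h5
      rw [h5]; rfl
    calc ‖S s x - S t₀ x‖ = ‖S s (x - S (t₀ - s) x)‖ := by rw [h4, map_sub]
    _ ≤ M * ‖x - S (t₀ - s) x‖ :=
        ContinuousLinearMap.le_of_opNorm_le _ (hM s hs0 (by linarith)) _
    _ = M * ‖S (t₀ - s) x - x‖ := by rw [norm_sub_rev]
    _ ≤ M * (ε/(2*M)) := mul_le_mul_of_nonneg_left h3.le hM0.le
    _ = ε/2 := by field_simp
    _ < ε := by linarith

end Aux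

section Aux2

variable {X : Type*} [NormedAddCommGroup X] [NormedSpace ℂ X] [CompleteSpace X]

-- integrability helper
lemma aux_intble (S : ℝ → X →L[ℂ] X)
    (hcont : ∀ (x : X), ∀ t₀ : ℝ, 0 ≤ t₀ → ContinuousWithinAt (fun s => S s x) (Ici 0) t₀)
    (x : X) {a c : ℝ} (ha : 0 ≤ a) (hac : a ≤ c) :
    IntervalIntegrable (fun u => S u x) volume a c := by
  have h1 : ContinuousOn (fun u => S u x) (Icc a c) := fun u hu =>
    (hcont x u (le_trans ha hu.1)).mono (fun v hv => le_trans ha hv.1)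
  rw [← uIcc_of_le hac] at h1
  exact h1.intervalIntegrable

lemma aux_avg (S : ℝ → X →L[ℂ] X)
    (hcont : ∀ (x : X), ∀ t₀ : ℝ, 0 ≤ t₀ → ContinuousWithinAt (fun s => S s x) (Ici 0) t₀)
    (x : X) {a : ℝ} (ha : 0 ≤ a) :
    Tendsto (fun h : ℝ => (1/(h:ℂ)) • ∫ u in a..(a+h), S u x) (𝓝[>] 0) (𝓝 (S a x)) := by
  rw [Metric.tendsto_nhdsWithin_nhds]
  intro ε hε
  obtain ⟨δ, hδ, hc⟩ := Metric.continuousWithinAt_iff.mp (hcont x a ha) (ε/2) (by positivity)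
  refine ⟨δ, hδ, ?_⟩
  intro h hh hdh
  have hh0 : (0:ℝ) < h := hh
  have hdh' : h < δ := by rwa [Real.dist_eq, sub_zero, abs_of_pos hh0] at hdh
  have hint : IntervalIntegrable (fun u => S u x) volume a (a+h) :=
    aux_intble S hcont x ha (by linarith)
  have key : (1/(h:ℂ)) • (∫ u in a..(a+h), S u x) - S a x
      = (1/(h:ℂ)) • ∫ u in a..(a+h), (S u x - S a x) := by
    rw [intervalIntegral.integral_sub hint intervalIntegrable_const,
      intervalIntegral.integral_const, smul_sub, add_sub_cancel_left]
    congr 1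
    rw [← Complex.coe_smul, smul_smul]
    have hhne : (h:ℂ) ≠ 0 := by exact_mod_cast hh0.ne'
    rw [show (1/(h:ℂ)) * (h:ℂ) = 1 by field_simp]
    rw [one_smul]
  have hb : ∀ u ∈ Set.uIoc a (a+h), ‖S u x - S a x‖ ≤ ε/2 := by
    intro u hu
    rw [uIoc_of_le (by linarith : a ≤ a + h)] at hu
    have hd : dist u a < δ := by
      rw [Real.dist_eq, abs_of_pos (by linarith [hu.1] : (0:ℝ) < u - a)]
      linarith [hu.2]
    have := hc (le_trans ha hu.1.le : u ∈ Ici (0:ℝ)) hd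
    rw [dist_eq_norm] at this
    exact this.le
  rw [dist_eq_norm, key, norm_smul]
  have h1 : ‖∫ u in a..(a+h), (S u x - S a x)‖ ≤ (ε/2) * |a + h - a| :=
    intervalIntegral.norm_integral_le_of_norm_le_const hb
  have h2 : ‖(1/(h:ℂ))‖ = 1/h := by
    rw [norm_div, norm_one, Complex.norm_real]
    · simp [abs_of_pos hh0]
  rw [h2]
  calc (1/h) * ‖∫ u in a..(a+h), (S u x - S a x)‖ ≤ (1/h) * ((ε/2) * |a + h - a|) := by
        apply mul_le_mul_of_nonneg_left h1 (by positivity)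
  _ = ε/2 := by
        rw [add_sub_cancel_left, abs_of_pos hh0]; field_simp
  _ < ε := by linarith

end Aux2

section Aux3

variable {X : Type*} [NormedAddCommGroup X] [NormedSpace ℂ X] [CompleteSpace X]

lemma aux_memD (S : ℝ → X →L[ℂ] X)
    (hS_add : ∀ t ≥ (0:ℝ), ∀ s ≥ (0:ℝ), S (t + s) = (S t).comp (S s))
    (hcont : ∀ (x : X), ∀ t₀ : ℝ, 0 ≤ t₀ → ContinuousWithinAt (fun s => S s x) (Ici 0) t₀)
    (hintble : ∀ (x : X), ∀ a c : ℝ, 0 ≤ a → a ≤ c →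
      IntervalIntegrable (fun u => S u x) volume a c)
    (havg : ∀ (x : X), ∀ a : ℝ, 0 ≤ a →
      Tendsto (fun h : ℝ => (1/(h:ℂ)) • ∫ u in a..(a+h), S u x) (𝓝[>] 0) (𝓝 (S a x)))
    (x : X) {h : ℝ} (hh : 0 < h) :
    ∃ L : X, Tendsto (fun t : ℝ =>
        (1 / (t:ℂ)) • (S t ((1/(h:ℂ)) • ∫ u in (0:ℝ)..h, S u x)
          - (1/(h:ℂ)) • ∫ u in (0:ℝ)..h, S u x)) (𝓝[>] 0)
      (𝓝 L) := by
  refine ⟨(1/(h:ℂ)) • (S h x - S 0 x), ?_⟩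
  have heq : ∀ᶠ t : ℝ in 𝓝[>] (0:ℝ), (1 / (t:ℂ)) • (S t ((1/(h:ℂ)) • ∫ u in (0:ℝ)..h, S u x)
          - (1/(h:ℂ)) • ∫ u in (0:ℝ)..h, S u x)
      = (1/(h:ℂ)) • ((1/(t:ℂ)) • (∫ u in h..(h+t), S u x)
          - (1/(t:ℂ)) • (∫ u in (0:ℝ)..(0+t), S u x)) := by
    filter_upwards [self_mem_nhdsWithin] with t ht
    have ht0 : (0:ℝ) < t := ht
    have e1 : S t ((1/(h:ℂ)) • ∫ u in (0:ℝ)..h, S u x)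
        = (1/(h:ℂ)) • ∫ u in t..(t+h), S u x := by
      rw [(S t).map_smul]
      congr 1
      rw [← ContinuousLinearMap.intervalIntegral_comp_comm _ (hintble x 0 h le_rfl hh.le)]
      have e2 : ∀ u ∈ uIcc (0:ℝ) h, S t (S u x) = S (t + u) x := by
        intro u hu
        rw [uIcc_of_le hh.le] at hu
        rw [hS_add t ht0.le u hu.1]
        rfl
      rw [intervalIntegral.integral_congr e2]
      rw [intervalIntegral.integral_comp_add_left (fun u => S u x) t, add_zero]
    rw [e1]
    -- remains: (1/t) • ((1/h) • ∫_t^{t+h} - (1/h) • ∫_0^h) = (1/h) • ((1/t) • ∫_h^{h+t} - (1/t) • ∫_0^{0+t})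
    have hadj1 : (∫ u in (0:ℝ)..t, S u x) + (∫ u in t..(t+h), S u x) = ∫ u in (0:ℝ)..(t+h), S u x :=
      intervalIntegral.integral_add_adjacent_intervals (hintble x 0 t le_rfl ht0.le)
        (hintble x t (t+h) ht0.le (by linarith))
    have hadj2 : (∫ u in (0:ℝ)..h, S u x) + (∫ u in h..(h+t), S u x) = ∫ u in (0:ℝ)..(h+t), S u x :=
      intervalIntegral.integral_add_adjacent_intervals (hintble x 0 h le_rfl hh.le)
        (hintble x h (h+t) hh.le (by linarith))
    have hkey : (∫ u in t..(t+h), S u x) - (∫ u in (0:ℝ)..h, S u x)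
        = (∫ u in h..(h+t), S u x) - (∫ u in (0:ℝ)..t, S u x) := by
      have e4 : (∫ u in (0:ℝ)..(t+h), S u x) = ∫ u in (0:ℝ)..(h+t), S u x := by
        rw [add_comm]
      have h4 := (hadj1.trans e4).trans hadj2.symm
      rw [sub_eq_sub_iff_add_eq_add]
      calc (∫ u in t..(t+h), S u x) + (∫ u in (0:ℝ)..t, S u x)
          = (∫ u in (0:ℝ)..t, S u x) + (∫ u in t..(t+h), S u x) := add_comm _ _
      _ = (∫ u in (0:ℝ)..h, S u x) + (∫ u in h..(h+t), S u x) := h4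
      _ = (∫ u in h..(h+t), S u x) + (∫ u in (0:ℝ)..h, S u x) := add_comm _ _
    rw [← smul_sub, ← smul_sub, smul_comm, hkey, zero_add]
  rw [tendsto_congr' heq]
  have hlim := ((havg x h hh.le).sub (havg x 0 le_rfl)).const_smul ((1:ℂ)/h)
  exact hlim

lemma aux_commute (S : ℝ → X →L[ℂ] X)
    (hS_add : ∀ t ≥ (0:ℝ), ∀ s ≥ (0:ℝ), S (t + s) = (S t).comp (S s))
    (Γ : X → X) (𝒟 : Set X)
    (h𝒟 : ∀ f : X, f ∈ 𝒟 ↔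
      ∃ L : X, Tendsto (fun t : ℝ => (1 / (t:ℂ)) • (S t f - f)) (𝓝[>] 0) (𝓝 L))
    (hΓ : ∀ f ∈ 𝒟,
      Tendsto (fun t : ℝ => (1 / (t:ℂ)) • (S t f - f)) (𝓝[>] 0) (𝓝 (Γ f)))
    {x : X} (hx : x ∈ 𝒟) {r : ℝ} (hr : 0 ≤ r) :
    S r x ∈ 𝒟 ∧ Γ (S r x) = S r (Γ x) := by
  have key : ∀ᶠ t : ℝ in 𝓝[>] (0:ℝ),
      (1/(t:ℂ)) • (S t (S r x) - S r x) = S r ((1/(t:ℂ)) • (S t x - x)) := by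
    filter_upwards [self_mem_nhdsWithin] with t ht
    have h1 : S t (S r x) = S r (S t x) := by
      rw [← ContinuousLinearMap.comp_apply, ← hS_add t (le_of_lt ht) r hr,
        add_comm, hS_add r hr t (le_of_lt ht)]
      rfl
    rw [(S r).map_smul, map_sub, h1]
  have h1 : Tendsto (fun t : ℝ => (1/(t:ℂ)) • (S t (S r x) - S r x)) (𝓝[>] 0)
      (𝓝 (S r (Γ x))) := by
    rw [tendsto_congr' key]
    exact ((S r).continuous.tendsto _).comp (hΓ x hx)
  have hmem : S r x ∈ 𝒟 := (h𝒟 _).mpr ⟨_, h1⟩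
  exact ⟨hmem, tendsto_nhds_unique (hΓ _ hmem) h1⟩

end Aux3

section Aux4

variable {X : Type*} [NormedAddCommGroup X] [NormedSpace ℂ X] [CompleteSpace X]

lemma aux_deriv (S : ℝ → X →L[ℂ] X)
    (hS_add : ∀ t ≥ (0:ℝ), ∀ s ≥ (0:ℝ), S (t + s) = (S t).comp (S s))
    (hbound : ∀ b : ℝ, ∃ M : ℝ, 1 ≤ M ∧ ∀ s, 0 ≤ s → s ≤ b → ‖S s‖ ≤ M)
    (hcont : ∀ (x : X), ∀ t₀ : ℝ, 0 ≤ t₀ → ContinuousWithinAt (fun s => S s x) (Ici 0) t₀)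
    (Γ : X → X) (𝒟 : Set X)
    (hΓ : ∀ f ∈ 𝒟,
      Tendsto (fun t : ℝ => (1 / (t:ℂ)) • (S t f - f)) (𝓝[>] 0) (𝓝 (Γ f)))
    {x : X} (hx : x ∈ 𝒟) {r₀ : ℝ} (hr₀ : 0 < r₀) :
    HasDerivWithinAt (fun r => S r x) (S r₀ (Γ x)) (Icc 0 r₀) r₀ := by
  rw [hasDerivWithinAt_iff_tendsto_slope]
  obtain ⟨M, hM1, hM⟩ := hbound r₀
  have hM0 : (0:ℝ) < M := lt_of_lt_of_le one_pos hM1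
  have key : ∀ r ∈ Icc (0:ℝ) r₀ \ {r₀},
      slope (fun r => S r x) r₀ r = S r ((1/(((r₀ - r):ℝ):ℂ)) • (S (r₀ - r) x - x)) := by
    intro r hr
    obtain ⟨⟨hr0, hrr⟩, hne⟩ := hr
    have hne' : r ≠ r₀ := hne
    have hlt : r < r₀ := lt_of_le_of_ne hrr hne'
    have hpos : 0 < r₀ - r := by linarith
    have hcomp : S r₀ x = S r (S (r₀ - r) x) := by
      have h2 := hS_add r hr0 (r₀ - r) hpos.le
      rw [add_sub_cancel] at h2
      rw [h2]; rfl
    rw [slope_def_module, hcomp, (S r).map_smul, map_sub]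
    have e1 : (1/(((r₀ - r):ℝ):ℂ)) • (S r (S (r₀ - r) x) - S r x)
        = ((r₀ - r)⁻¹ : ℝ) • (S r (S (r₀ - r) x) - S r x) := by
      rw [← Complex.coe_smul]
      push_cast
      rw [one_div]
    rw [e1]
    have e2 : (r - r₀)⁻¹ = -((r₀ - r)⁻¹) := by
      rw [← neg_sub r₀ r, inv_neg]
    rw [e2, neg_smul, ← smul_neg, neg_sub]
  refine Tendsto.congr' (EventuallyEq.symm (eventually_nhdsWithin_of_forall key)) ?_
  rw [Metric.tendsto_nhdsWithin_nhds]
  intro ε hε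
  obtain ⟨δ₁, hδ₁, hq⟩ := Metric.tendsto_nhdsWithin_nhds.mp (hΓ x hx) (ε/(2*M)) (by positivity)
  obtain ⟨δ₂, hδ₂, hc⟩ := Metric.continuousWithinAt_iff.mp (hcont (Γ x) r₀ hr₀.le) (ε/2)
    (by positivity)
  refine ⟨min δ₁ δ₂, by positivity, ?_⟩
  intro r hr hdist
  obtain ⟨⟨hr0, hrr⟩, hne⟩ := hr
  have hne' : r ≠ r₀ := hne
  have hlt : r < r₀ := lt_of_le_of_ne hrr hne'
  have hpos : 0 < r₀ - r := by linarith
  rw [Real.dist_eq] at hdist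
  have habs : |r - r₀| < δ₁ := lt_of_lt_of_le hdist (min_le_left _ _)
  have habs2 : |r - r₀| < δ₂ := lt_of_lt_of_le hdist (min_le_right _ _)
  have hd1 : dist (r₀ - r) 0 < δ₁ := by
    rw [Real.dist_eq, sub_zero, abs_of_pos hpos]
    rw [abs_sub_comm, abs_of_pos hpos] at habs
    exact habs
  have hq' := hq (mem_Ioi.mpr hpos) hd1
  rw [dist_eq_norm] at hq' ⊢
  have hc' := hc (mem_Ici.mpr hr0) (by rw [Real.dist_eq]; exact habs2)
  rw [dist_eq_norm] at hc'
  set Q := (1/(((r₀ - r):ℝ):ℂ)) • (S (r₀ - r) x - x) with hQ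
  calc ‖S r Q - S r₀ (Γ x)‖
      ≤ ‖S r Q - S r (Γ x)‖ + ‖S r (Γ x) - S r₀ (Γ x)‖ := by
        exact norm_sub_le_norm_sub_add_norm_sub _ _ _
  _ ≤ M * ‖Q - Γ x‖ + ε/2 := by
        refine add_le_add ?_ hc'.le
        rw [← map_sub]
        exact ContinuousLinearMap.le_of_opNorm_le _ (hM r hr0 hrr) _
  _ < M * (ε/(2*M)) + ε/2 :=
        add_lt_add_of_lt_of_le (mul_lt_mul_of_pos_left hq' hM0) le_rfl
  _ = ε := by
        rw [show M * (ε/(2*M)) = ε/2 by field_simp]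
        ring

lemma aux_eval (ι : X →ₗ[ℂ] (ℂ → ℂ)) (K : Set ℂ) (C : ℝ)
    (hK : ∀ y : X, ∀ u ∈ K, ‖ι y u‖ ≤ C * ‖y‖)
    {l : Filter ℝ} {x : ℝ → X} {xl : X} {w : ℝ → ℂ} {wl : ℂ}
    (hx : Tendsto x l (𝓝 xl)) (hw : Tendsto w l (𝓝 wl)) (hwK : ∀ᶠ a in l, w a ∈ K)
    (hcont : ContinuousAt (ι xl) wl) :
    Tendsto (fun a => ι (x a) (w a)) l (𝓝 (ι xl wl)) := by
  have h0 : Tendsto (fun a => ι (x a - xl) (w a)) l (𝓝 0) := by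
    apply squeeze_zero_norm'
    · filter_upwards [hwK] with a ha
      exact hK _ _ ha
    · have h1 : Tendsto (fun a => ‖x a - xl‖) l (𝓝 0) :=
        tendsto_iff_norm_sub_tendsto_zero.mp hx
      simpa using h1.const_mul C
  have h1 : Tendsto (fun a => ι xl (w a)) l (𝓝 (ι xl wl)) := hcont.tendsto.comp hw
  have h2 := h0.add h1
  rw [zero_add] at h2
  refine h2.congr (fun a => ?_)
  rw [map_sub]
  simp only [Pi.sub_apply]
  ring

end Aux4

section Aux5

variable {X : Type*} [NormedAddCommGroup X] [NormedSpace ℂ X] [CompleteSpace X]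

lemma aux_core (Ω : Set ℂ) (hΩopen : IsOpen Ω)
    (ι : X →ₗ[ℂ] (ℂ → ℂ))
    (hι_hol : ∀ f : X, DifferentiableOn ℂ (ι f) Ω)
    (hι_emb : ∀ K ⊆ Ω, IsCompact K → ∃ C > 0, ∀ f : X, ∀ z ∈ K, ‖ι f z‖ ≤ C * ‖f‖)
    (g G : ℂ → ℂ) (hg : DifferentiableOn ℂ g Ω)
    (τ : ℂ → ℝ≥0∞) (φ : ℝ → ℂ → ℂ)
    (hφ_zero : ∀ z ∈ Ω, φ 0 z = z)
    (hφ_sol : ∀ z ∈ Ω, ∀ t : ℝ, 0 ≤ t → ENNReal.ofReal t < τ z →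
      φ t z ∈ Ω ∧ HasDerivWithinAt (fun s : ℝ => φ s z) (G (φ t z)) (Ici 0) t)
    (S : ℝ → X →L[ℂ] X)
    (hS_zero : S 0 = ContinuousLinearMap.id ℂ X)
    (hScont : ∀ (x : X), ∀ t₀ : ℝ, 0 ≤ t₀ → ContinuousWithinAt (fun s => S s x) (Ici 0) t₀)
    (Γ : X → X) (𝒟 : Set X)
    (hΓ_form : ∀ f ∈ 𝒟, ∀ z ∈ Ω, ι (Γ f) z = g z * ι f z + G z * deriv (ι f) z)
    (hcomm : ∀ x ∈ 𝒟, ∀ r : ℝ, 0 ≤ r → S r x ∈ 𝒟 ∧ Γ (S r x) = S r (Γ x))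
    (hXderiv : ∀ x ∈ 𝒟, ∀ r₀ : ℝ, 0 < r₀ →
      HasDerivWithinAt (fun r => S r x) (S r₀ (Γ x)) (Icc 0 r₀) r₀)
    (heval : ∀ (K : Set ℂ) (C : ℝ), (∀ y : X, ∀ u ∈ K, ‖ι y u‖ ≤ C * ‖y‖) →
      ∀ {l : Filter ℝ} {x : ℝ → X} {xl : X} {w : ℝ → ℂ} {wl : ℂ},
      Tendsto x l (𝓝 xl) → Tendsto w l (𝓝 wl) → (∀ᶠ a in l, w a ∈ K) →
      ContinuousAt (ι xl) wl → Tendsto (fun a => ι (x a) (w a)) l (𝓝 (ι xl wl)))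
    {x : X} (hx : x ∈ 𝒟) {z : ℂ} (hz : z ∈ Ω) {t : ℝ} (ht : 0 ≤ t)
    (htτ : ENNReal.ofReal t < τ z) :
    ι (S t x) z = Complex.exp (∫ s in (0:ℝ)..t, g (φ s z)) * ι x (φ t z) := by
  have hsol : ∀ s ∈ Icc (0:ℝ) t, φ s z ∈ Ω ∧
      HasDerivWithinAt (fun u : ℝ => φ u z) (G (φ s z)) (Ici 0) s := fun s hs =>
    hφ_sol z hz s hs.1 (lt_of_le_of_lt (ENNReal.ofReal_le_ofReal hs.2) htτ)
  have φcont : ContinuousOn (fun s => φ s z) (Icc 0 t) := fun s hs =>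
    ((hsol s hs).2.continuousWithinAt).mono (fun u hu => hu.1)
  obtain ⟨C, hCpos, hC⟩ := hι_emb ((fun s => φ s z) '' (Icc 0 t))
    (by rintro _ ⟨s, hs, rfl⟩; exact (hsol s hs).1)
    (isCompact_Icc.image_of_continuousOn φcont)
  set K := (fun s => φ s z) '' (Icc 0 t) with hK
  set E := fun s : ℝ => ∫ u in (0:ℝ)..s, g (φ u z) with hE
  have gcont : ContinuousOn (fun u => g (φ u z)) (Icc 0 t) :=
    hg.continuousOn.comp φcont (fun u hu => (hsol u hu).1)
  set F := fun s : ℝ => Complex.exp (E s) * ι (S (t - s) x) (φ s z) with hF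
  have hShift : ∀ v : X, ContinuousOn (fun s => S (t - s) v) (Icc 0 t) := by
    intro v s hs
    have h1 : ContinuousWithinAt (fun r => S r v) (Ici 0) (t - s) :=
      hScont v (t - s) (by linarith [hs.2])
    exact h1.comp ((continuous_const.sub continuous_id).continuousWithinAt)
      (fun u hu => by simp only [mem_Ici]; linarith [hu.2])
  have Acont : ContinuousOn (fun s => ι (S (t - s) x) (φ s z)) (Icc 0 t) := by
    intro s hs
    exact heval K C hC (hShift x s hs) (φcont s hs)
      (by filter_upwards [self_mem_nhdsWithin] with u hu; exact mem_image_of_mem _ hu)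
      (((hι_hol _).differentiableAt (hΩopen.mem_nhds (hsol s hs).1)).continuousAt)
  have Econt : ContinuousOn E (Icc 0 t) := by
    have hInt : IntegrableOn (fun u => g (φ u z)) (Icc 0 t) := gcont.integrableOn_Icc
    have h2 := intervalIntegral.continuousOn_primitive_interval
      (by rwa [uIcc_of_le ht] : IntegrableOn (fun u => g (φ u z)) (uIcc 0 t))
    rwa [uIcc_of_le ht] at h2
  have Fcont : ContinuousOn F (Icc 0 t) :=
    (Complex.continuous_exp.comp_continuousOn Econt).mul Acont
  have Fderiv : ∀ s₀ ∈ Ico (0:ℝ) t, HasDerivWithinAt F 0 (Ici s₀) s₀ := by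
    intro s₀ hs₀
    obtain ⟨hs₀0, hs₀t⟩ := hs₀
    have hs₀mem : s₀ ∈ Icc (0:ℝ) t := ⟨hs₀0, hs₀t.le⟩
    have hφΩ : φ s₀ z ∈ Ω := (hsol s₀ hs₀mem).1
    have hr₀pos : 0 < t - s₀ := by linarith
    obtain ⟨hmem₀, hΓcomm⟩ := hcomm x hx (t - s₀) hr₀pos.le
    -- derivative of E
    have hE' : HasDerivWithinAt E (g (φ s₀ z)) (Icc s₀ t) s₀ := by
      have hInt : IntervalIntegrable (fun u => g (φ u z)) volume 0 s₀ := by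
        have h3 : ContinuousOn (fun u => g (φ u z)) (uIcc 0 s₀) := by
          rw [uIcc_of_le hs₀0]
          exact gcont.mono (Icc_subset_Icc le_rfl hs₀t.le)
        exact h3.intervalIntegrable
      have hmeas : StronglyMeasurableAtFilter (fun u => g (φ u z)) (𝓝[>] s₀) volume :=
        ⟨Ioc s₀ t, Ioc_mem_nhdsGT_of_mem ⟨le_rfl, hs₀t⟩,
          ((gcont.mono (fun u hu => ⟨le_trans hs₀0 hu.1.le, hu.2⟩)).aestronglyMeasurable
            measurableSet_Ioc)⟩
      have hcw : ContinuousWithinAt (fun u => g (φ u z)) (Ioi s₀) s₀ :=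
        ContinuousWithinAt.mono_of_mem_nhdsWithin (gcont s₀ hs₀mem) (Icc_mem_nhdsGT_of_mem ⟨hs₀0, hs₀t⟩)
      exact (intervalIntegral.integral_hasDerivWithinAt_right hInt hmeas hcw).mono
        Icc_subset_Ici_self
    have hexp' : HasDerivWithinAt (fun s => Complex.exp (E s))
        (Complex.exp (E s₀) * g (φ s₀ z)) (Icc s₀ t) s₀ := hE'.cexp
    have hφ' : HasDerivWithinAt (fun s => φ s z) (G (φ s₀ z)) (Icc s₀ t) s₀ :=
      ((hsol s₀ hs₀mem).2).mono (fun u hu => le_trans hs₀0 hu.1)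
    -- X-valued derivative of s ↦ S (t-s) x
    have hXd : HasDerivWithinAt (fun s : ℝ => S (t - s) x) (-(S (t - s₀) (Γ x)))
        (Icc s₀ t) s₀ := by
      have h1 : HasDerivWithinAt (fun r => S r x) (S (t - s₀) (Γ x)) (Icc 0 (t - s₀)) (t - s₀) :=
        hXderiv x hx (t - s₀) hr₀pos
      have h2 : HasDerivWithinAt (fun s : ℝ => t - s) (-1 : ℝ) (Icc s₀ t) s₀ :=
        ((hasDerivAt_id s₀).const_sub t).hasDerivWithinAt
      have h3 : MapsTo (fun s : ℝ => t - s) (Icc s₀ t) (Icc 0 (t - s₀)) := by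
        intro u hu
        have h := mem_Icc.mp hu
        show t - u ∈ Icc 0 (t - s₀)
        exact mem_Icc.mpr ⟨by linarith [h.2], by linarith [h.1]⟩
      have h4 := h1.scomp s₀ h2 h3
      simpa only [Function.comp_def, neg_smul, one_smul, neg_neg] using h4
    have hDd : HasDerivWithinAt (fun s : ℝ => S (t - s) x - S (t - s₀) x)
        (-(S (t - s₀) (Γ x))) (Icc s₀ t) s₀ := hXd.sub_const _
    have hslopeD : Tendsto (slope (fun s : ℝ => S (t - s) x - S (t - s₀) x) s₀)
        (𝓝[Icc s₀ t \ {s₀}] s₀) (𝓝 (-(S (t - s₀) (Γ x)))) :=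
      hasDerivWithinAt_iff_tendsto_slope.mp hDd
    have hwl : Tendsto (fun s => φ s z) (𝓝[Icc s₀ t \ {s₀}] s₀) (𝓝 (φ s₀ z)) :=
      (φcont s₀ hs₀mem).mono (fun u hu => ⟨le_trans hs₀0 hu.1.1, hu.1.2⟩)
    have hwK : ∀ᶠ s in 𝓝[Icc s₀ t \ {s₀}] s₀, φ s z ∈ K := by
      filter_upwards [self_mem_nhdsWithin] with u hu
      exact mem_image_of_mem _ ⟨le_trans hs₀0 hu.1.1, hu.1.2⟩
    have hBslope := heval K C hC hslopeD hwl hwK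
      (((hι_hol _).differentiableAt (hΩopen.mem_nhds hφΩ)).continuousAt)
    have hBd : HasDerivWithinAt (fun s : ℝ => ι (S (t - s) x - S (t - s₀) x) (φ s z))
        (ι (-(S (t - s₀) (Γ x))) (φ s₀ z)) (Icc s₀ t) s₀ := by
      rw [hasDerivWithinAt_iff_tendsto_slope]
      refine hBslope.congr' ?_
      filter_upwards [self_mem_nhdsWithin] with u hu
      obtain ⟨humem, hune⟩ := hu
      have hune' : u ≠ s₀ := hune
      have hDs₀ : (S (t - s₀) x - S (t - s₀) x : X) = 0 := sub_self _
      rw [slope_def_module, slope_def_module, hDs₀, map_zero, Pi.zero_apply, sub_zero, sub_zero,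
        LinearMap.map_smul_of_tower, Pi.smul_apply]
    -- derivative of s ↦ ι (S (t-s₀) x) (φ s z)
    have hd₀ : HasDerivAt (ι (S (t - s₀) x)) (deriv (ι (S (t - s₀) x)) (φ s₀ z)) (φ s₀ z) :=
      ((hι_hol _).differentiableAt (hΩopen.mem_nhds hφΩ)).hasDerivAt
    have hCc : HasDerivWithinAt (fun s => ι (S (t - s₀) x) (φ s z))
        (G (φ s₀ z) * deriv (ι (S (t - s₀) x)) (φ s₀ z)) (Icc s₀ t) s₀ := by
      have hl := (hd₀.hasFDerivAt.restrictScalars ℝ)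
      have h5 := hl.comp_hasDerivWithinAt s₀ hφ'
      simpa only [Function.comp_def, ContinuousLinearMap.coe_restrictScalars',
        ContinuousLinearMap.smulRight_apply, ContinuousLinearMap.one_apply, smul_eq_mul,
        ContinuousLinearMap.toSpanSingleton_apply,
        one_mul] using h5
    have hA : HasDerivWithinAt (fun s => ι (S (t - s) x) (φ s z))
        (ι (-(S (t - s₀) (Γ x))) (φ s₀ z) + G (φ s₀ z) * deriv (ι (S (t - s₀) x)) (φ s₀ z))
        (Icc s₀ t) s₀ := by
      have h6 := hBd.add hCc
      have heqfun : (fun s : ℝ => ι (S (t - s) x - S (t - s₀) x) (φ s z)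
          + ι (S (t - s₀) x) (φ s z)) = fun s => ι (S (t - s) x) (φ s z) := by
        funext u
        rw [map_sub]
        simp only [Pi.sub_apply]
        ring
      rw [← heqfun]; exact h6
    have hF' := hexp'.mul hA
    have hval : Complex.exp (E s₀) * g (φ s₀ z) * (ι (S (t - s₀) x) (φ s₀ z))
        + Complex.exp (E s₀) * (ι (-(S (t - s₀) (Γ x))) (φ s₀ z)
          + G (φ s₀ z) * deriv (ι (S (t - s₀) x)) (φ s₀ z)) = 0 := by
      have hform := hΓ_form (S (t - s₀) x) hmem₀ (φ s₀ z) hφΩ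
      rw [hΓcomm] at hform
      have hneg : ι (-(S (t - s₀) (Γ x))) (φ s₀ z) = -(ι (S (t - s₀) (Γ x)) (φ s₀ z)) := by
        rw [map_neg]; rfl
      rw [hneg, hform]
      ring
    have hF0 : HasDerivWithinAt F 0 (Icc s₀ t) s₀ := hval ▸ hF'
    exact hF0.mono_of_mem_nhdsWithin (Icc_mem_nhdsGE_of_mem ⟨le_rfl, hs₀t⟩)
  have hconst := constant_of_has_deriv_right_zero Fcont Fderiv t (right_mem_Icc.mpr ht)
  have hFt : F t = Complex.exp (E t) * ι x (φ t z) := by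
    simp only [hF, sub_self, hS_zero, ContinuousLinearMap.id_apply]
  have hF0' : F 0 = ι (S t x) z := by
    simp only [hF, hE, intervalIntegral.integral_same, Complex.exp_zero, sub_zero,
      hφ_zero z hz, one_mul]
  have hEt : E t = ∫ s in (0:ℝ)..t, g (φ s z) := rfl
  rw [← hEt, ← hF0', ← hconst, hFt]

end Aux5

/-- If the generator of a strongly continuous semigroup `(S_t)` on
`X ↪ Hol(Ω)` satisfies `Γf = g f + G f′`, and `φ(·,z)` is the unique maximal solution of
`u′ = G(u), u(0) = z` on `[0, τ(z))`, then `(S_t f)(z) = m_t(z)·f(φ(t,z))` for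
`0 ≤ t < τ(z)`, where `m_t(z) = exp(∫₀ᵗ g(φ(s,z)) ds)`. -/
theorem semigroup_is_weighted_composition_on_maximal_interval
    -- Ω : nonempty open simply connected subset of ℂ
    (Ω : Set ℂ) (hΩne : Ω.Nonempty) (hΩopen : IsOpen Ω)
    (hΩsc : SimplyConnectedSpace Ω)
    -- X : complex Banach space embedding continuously in Hol(Ω)
    (X : Type*) [NormedAddCommGroup X] [NormedSpace ℂ X] [CompleteSpace X]
    (ι : X →ₗ[ℂ] (ℂ → ℂ)) (hι_inj : Function.Injective ι)
    (hι_hol : ∀ f : X, DifferentiableOn ℂ (ι f) Ω)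
    (hι_emb : ∀ K ⊆ Ω, IsCompact K → ∃ C > 0, ∀ f : X, ∀ z ∈ K, ‖ι f z‖ ≤ C * ‖f‖)
    -- g, G ∈ Hol(Ω)
    (g G : ℂ → ℂ) (hg : DifferentiableOn ℂ g Ω) (hG : DifferentiableOn ℂ G Ω)
    -- φ(·,z) : [0, τ(z)) → Ω, the unique maximal solution of u′ = G(u), u(0) = z
    (τ : ℂ → ℝ≥0∞) (hτ_pos : ∀ z ∈ Ω, 0 < τ z)
    (φ : ℝ → ℂ → ℂ)
    (hφ_zero : ∀ z ∈ Ω, φ 0 z = z)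
    (hφ_sol : ∀ z ∈ Ω, ∀ t : ℝ, 0 ≤ t → ENNReal.ofReal t < τ z →
      φ t z ∈ Ω ∧ HasDerivWithinAt (fun s : ℝ => φ s z) (G (φ t z)) (Ici 0) t)
    -- maximality : no solution exists beyond time τ(z)
    (hφ_max : ∀ z ∈ Ω, ∀ T : ℝ≥0∞, ∀ ψ : ℝ → ℂ, τ z < T → ψ 0 = z →
      ¬ (∀ t : ℝ, 0 ≤ t → ENNReal.ofReal t < T →
        ψ t ∈ Ω ∧ HasDerivWithinAt ψ (G (ψ t)) (Ici 0) t))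
    -- (S_t) : strongly continuous semigroup on X
    (S : ℝ → X →L[ℂ] X)
    (hS_zero : S 0 = ContinuousLinearMap.id ℂ X)
    (hS_add : ∀ t ≥ (0:ℝ), ∀ s ≥ (0:ℝ), S (t + s) = (S t).comp (S s))
    (hS_cont : ∀ f : X, Tendsto (fun t : ℝ => S t f) (𝓝[>] 0) (𝓝 f))
    -- (Γ, 𝒟) : its infinitesimal generator, with Γ f = g f + G f′
    (Γ : X → X) (𝒟 : Set X)
    (h𝒟 : ∀ f : X, f ∈ 𝒟 ↔
      ∃ L : X, Tendsto (fun t : ℝ => (1 / (t:ℂ)) • (S t f - f)) (𝓝[>] 0) (𝓝 L))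
    (hΓ : ∀ f ∈ 𝒟,
      Tendsto (fun t : ℝ => (1 / (t:ℂ)) • (S t f - f)) (𝓝[>] 0) (𝓝 (Γ f)))
    (hΓ_form : ∀ f ∈ 𝒟, ∀ z ∈ Ω, ι (Γ f) z = g z * ι f z + G z * deriv (ι f) z) :
    -- conclusion : (S_t f)(z) = m_t(z) f(φ(t,z)) for 0 ≤ t < τ(z)
    ∀ f : X, ∀ z ∈ Ω, ∀ t : ℝ, 0 ≤ t → ENNReal.ofReal t < τ z →
      ι (S t f) z = Complex.exp (∫ s in (0:ℝ)..t, g (φ s z)) * ι f (φ t z) := by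
  intro f z hz t ht htτ
  have hScont : ∀ (x : X), ∀ t₀ : ℝ, 0 ≤ t₀ → ContinuousWithinAt (fun s => S s x) (Ici 0) t₀ :=
    fun x t₀ ht₀ => aux_cont S hS_zero hS_add hS_cont x ht₀
  have hbound := aux_bound S hS_zero hS_add hS_cont
  have hintble : ∀ (x : X), ∀ a c : ℝ, 0 ≤ a → a ≤ c →
      IntervalIntegrable (fun u => S u x) MeasureTheory.volume a c :=
    fun x a c ha hac => aux_intble S hScont x ha hac
  have havg : ∀ (x : X), ∀ a : ℝ, 0 ≤ a →
      Tendsto (fun h : ℝ => (1/(h:ℂ)) • ∫ u in a..(a+h), S u x) (𝓝[>] 0) (𝓝 (S a x)) :=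
    fun x a ha => aux_avg S hScont x ha
  have hcomm : ∀ x ∈ 𝒟, ∀ r : ℝ, 0 ≤ r → S r x ∈ 𝒟 ∧ Γ (S r x) = S r (Γ x) :=
    fun x hx r hr => aux_commute S hS_add Γ 𝒟 h𝒟 hΓ hx hr
  have hXderiv : ∀ x ∈ 𝒟, ∀ r₀ : ℝ, 0 < r₀ →
      HasDerivWithinAt (fun r => S r x) (S r₀ (Γ x)) (Icc 0 r₀) r₀ :=
    fun x hx r₀ hr₀ => aux_deriv S hS_add hbound hScont Γ 𝒟 hΓ hx hr₀
  have hcore : ∀ x ∈ 𝒟,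
      ι (S t x) z = Complex.exp (∫ s in (0:ℝ)..t, g (φ s z)) * ι x (φ t z) :=
    fun x hx => aux_core Ω hΩopen ι hι_hol hι_emb g G hg τ φ hφ_zero hφ_sol S hS_zero hScont
      Γ 𝒟 hΓ_form hcomm hXderiv (fun K C hK => aux_eval ι K C hK) hx hz ht htτ
  obtain ⟨C₀, hC₀pos, hC₀⟩ := hι_emb {z} (singleton_subset_iff.mpr hz) isCompact_singleton
  have hφtΩ : φ t z ∈ Ω := (hφ_sol z hz t ht htτ).1
  obtain ⟨C₁, hC₁pos, hC₁⟩ := hι_emb {φ t z} (singleton_subset_iff.mpr hφtΩ) isCompact_singleton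
  have hconapp : ∀ w ∈ Ω, ∀ v : X, ContinuousAt (ι v) w := fun w hw v =>
    ((hι_hol v).differentiableAt (hΩopen.mem_nhds hw)).continuousAt
  set y := fun h : ℝ => (1/(h:ℂ)) • ∫ u in (0:ℝ)..h, S u f with hy
  have hylim : Tendsto y (𝓝[>] 0) (𝓝 f) := by
    have h0 := aux_avg S hScont f (le_refl (0:ℝ))
    simp only [zero_add] at h0
    rwa [show S 0 f = f by rw [hS_zero]; rfl] at h0
  have h1 : Tendsto (fun h => ι (S t (y h)) z) (𝓝[>] 0) (𝓝 (ι (S t f) z)) :=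
    aux_eval ι {z} C₀ hC₀ (((S t).continuous.tendsto _).comp hylim) tendsto_const_nhds
      (Eventually.of_forall fun _ => mem_singleton _) (hconapp z hz _)
  have h2 : Tendsto (fun h => ι (y h) (φ t z)) (𝓝[>] 0) (𝓝 (ι f (φ t z))) :=
    aux_eval ι {φ t z} C₁ hC₁ hylim tendsto_const_nhds
      (Eventually.of_forall fun _ => mem_singleton _) (hconapp _ hφtΩ _)
  have h2' := h2.const_mul (Complex.exp (∫ s in (0:ℝ)..t, g (φ s z)))
  have heq : ∀ᶠ h in 𝓝[>] (0:ℝ), ι (S t (y h)) z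
      = Complex.exp (∫ s in (0:ℝ)..t, g (φ s z)) * ι (y h) (φ t z) := by
    filter_upwards [self_mem_nhdsWithin] with h hh
    have hmem : y h ∈ 𝒟 := (h𝒟 _).mpr (aux_memD S hS_add hScont hintble havg f hh)
    exact hcore (y h) hmem
  exact tendsto_nhds_unique (h1.congr' heq) h2'
end
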